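/- arXiv:2002.08116 — 6 statements merged into one kernel-verified Lean document; each statement's English description precedes it below -/
import Mathlib

section
/- Let h ∈ H₊ and P a polynomial such that the function x ↦ P(x)h(x) belongs to L²(ℝ). Then Ph ∈ H₊. -/
open MeasureTheory Complex Real Set FourierTransform
open scoped ENNReal ComplexConjugate

noncomputable section

abbrev L2R : Type := Lp ℂ 2 (volume : Measure ℝ)

/-- `U` is the Fourier–Plancherel transform: the unitary operator on `L²(ℝ)` that agrees
with the Fourier integral on integrable square-integrable functions. -/
def IsFourierL2 (U : L2R ≃ₗᵢ[ℂ] L2R) : Prop :=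
  ∀ (f : ℝ → ℂ) (_ : MeasureTheory.Integrable f) (hf2 : MeasureTheory.MemLp f 2 volume),
    U (hf2.toLp f) =ᵐ[volume] 𝓕 f

/-- Membership in the Hardy space `H₊`: the Fourier transform vanishes a.e. on `(-∞, 0)`. -/
def InHardy (U : L2R ≃ₗᵢ[ℂ] L2R) (f : L2R) : Prop :=
  ∀ᵐ x : ℝ, x < 0 → (U f : ℝ → ℂ) x = 0

open Filter Topology

variable {U : L2R ≃ₗᵢ[ℂ] L2R}

lemma inHardy_congr {f g : ℝ → ℂ} (hf : MemLp f 2 volume) (hg : MemLp g 2 volume)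
    (hfg : f =ᵐ[volume] g) (H : InHardy U (hf.toLp f)) : InHardy U (hg.toLp g) := by
  rwa [← MemLp.toLp_congr hf hg hfg]

lemma inHardy_add {f g : L2R} (hf : InHardy U f) (hg : InHardy U g) : InHardy U (f + g) := by
  have h3 : (U (f + g) : ℝ → ℂ) =ᵐ[volume] fun x => (U f : ℝ → ℂ) x + (U g : ℝ → ℂ) x := by
    rw [map_add]; exact Lp.coeFn_add _ _
  filter_upwards [hf, hg, h3] with x hf' hg' h3' hx
  rw [h3', hf' hx, hg' hx, add_zero]

lemma inHardy_smul {f : L2R} (c : ℂ) (hf : InHardy U f) : InHardy U (c • f) := by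
  have h3 : (U (c • f) : ℝ → ℂ) =ᵐ[volume] fun x => c • (U f : ℝ → ℂ) x := by
    rw [_root_.map_smul]; exact Lp.coeFn_smul _ _
  filter_upwards [hf, h3] with x hf' h3' hx
  rw [h3', hf' hx, smul_zero]

lemma inHardy_of_tendsto {f : ℕ → L2R} {g : L2R} (hf : ∀ n, InHardy U (f n))
    (h : Tendsto f atTop (𝓝 g)) : InHardy U g := by
  haveI : Fact ((1 : ℝ≥0∞) ≤ 2) := ⟨one_le_two⟩
  have hUc : Tendsto (fun n => U (f n)) atTop (𝓝 (U g)) :=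
    (U.continuous.tendsto _).comp h
  have hm : TendstoInMeasure volume (fun n => (U (f n) : ℝ → ℂ)) atTop (U g) :=
    tendstoInMeasure_of_tendsto_Lp hUc
  obtain ⟨ns, -, hns⟩ := hm.exists_seq_tendsto_ae
  have hall : ∀ᵐ x : ℝ, ∀ n, x < 0 → (U (f n) : ℝ → ℂ) x = 0 := ae_all_iff.2 hf
  filter_upwards [hns, hall] with x hx hallx hneg
  refine tendsto_nhds_unique hx ?_
  have : (fun i => (U (f (ns i)) : ℝ → ℂ) x) = fun _ => (0 : ℂ) := by
    funext i; exact hallx (ns i) hneg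
  rw [this]; exact tendsto_const_nhds

lemma fourier_mod (t : ℝ) (f : ℝ → ℂ) (ξ : ℝ) :
    𝓕 (fun x => (𝐞 (t * x) : ℂ) * f x) ξ = 𝓕 f (ξ - t) := by
  rw [Real.fourier_real_eq, Real.fourier_real_eq]
  congr 1; funext x
  rw [Circle.smul_def, Circle.smul_def, smul_eq_mul, smul_eq_mul, ← mul_assoc,
    ← Circle.coe_mul, ← AddChar.map_add_eq_mul]
  have : -(x * ξ) + t * x = -(x * (ξ - t)) := by ring
  rw [this]

lemma memLp_mod (t : ℝ) {f : ℝ → ℂ} (hf : MemLp f 2 volume) :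
    MemLp (fun x => (𝐞 (t * x) : ℂ) * f x) 2 volume := by
  have hc : Continuous fun x : ℝ => (𝐞 (t * x) : ℂ) :=
    continuous_subtype_val.comp (Real.continuous_fourierChar.comp (continuous_const.mul continuous_id))
  refine ⟨hc.aestronglyMeasurable.mul hf.1, ?_⟩
  have : eLpNorm (fun x => (𝐞 (t * x) : ℂ) * f x) 2 volume = eLpNorm f 2 volume := by
    apply eLpNorm_congr_norm_ae
    filter_upwards with x
    rw [norm_mul]
    rw [Circle.norm_coe, one_mul]
  rw [this]; exact hf.2

lemma integrable_mod (t : ℝ) {f : ℝ → ℂ} (hf : Integrable f) :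
    Integrable (fun x => (𝐞 (t * x) : ℂ) * f x) := by
  exact hf.bdd_mul (continuous_subtype_val.comp (Real.continuous_fourierChar.comp
    (continuous_const.mul continuous_id))).aestronglyMeasurable (Filter.Eventually.of_forall fun x => (Circle.norm_coe _).le)

lemma simpleFunc_seq {f : ℝ → ℂ} (hf : MemLp f 2 volume) :
    ∃ g : ℕ → ℝ → ℂ, (∀ n, MemLp (g n) 2 volume) ∧ (∀ n, Integrable (g n)) ∧
      Tendsto (fun n => eLpNorm (f - g n) 2 volume) atTop (𝓝 0) := by
  have h2 : (2 : ℝ≥0∞) ≠ ∞ := by norm_num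
  have key : ∀ n : ℕ, ∃ g : SimpleFunc ℝ ℂ,
      eLpNorm (f - ⇑g) 2 volume < ENNReal.ofReal ((n : ℝ) + 1)⁻¹ ∧ MemLp (⇑g) 2 volume := by
    intro n
    refine hf.exists_simpleFunc_eLpNorm_sub_lt h2 ?_
    simp [ENNReal.ofReal_eq_zero]
    positivity
  choose g hg1 hg2 using key
  refine ⟨fun n => ⇑(g n), hg2, ?_, ?_⟩
  · intro n
    exact (SimpleFunc.integrable_iff).2
      ((SimpleFunc.memLp_iff two_ne_zero h2).1 (hg2 n))
  · have hupper : Tendsto (fun n : ℕ => ENNReal.ofReal ((n : ℝ) + 1)⁻¹) atTop (𝓝 0) := by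
      have := ENNReal.tendsto_ofReal (tendsto_one_div_add_atTop_nhds_zero_nat)
      simpa [one_div] using this
    exact tendsto_of_tendsto_of_tendsto_of_le_of_le tendsto_const_nhds hupper
      (fun n => zero_le) (fun n => (hg1 n).le)

lemma toReal_tendsto_zero {e : ℕ → ℝ≥0∞} (h : Tendsto e atTop (𝓝 0)) :
    Tendsto (fun n => (e n).toReal) atTop (𝓝 0) := by
  have := (ENNReal.tendsto_toReal (ENNReal.zero_ne_top)).comp h
  exact this

lemma key_mod (hU : IsFourierL2 U) (t : ℝ) {f : ℝ → ℂ} (hf : MemLp f 2 volume) :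
    U ((memLp_mod t hf).toLp _) =
      Lp.compMeasurePreserving (fun ξ : ℝ => ξ - t)
        (measurePreserving_sub_right volume t) (U (hf.toLp f)) := by
  set mp := measurePreserving_sub_right (volume : Measure ℝ) t with hmp
  set T := Lp.compMeasurePreserving (E := ℂ) (p := 2) (fun ξ : ℝ => ξ - t) mp with hT
  obtain ⟨g, hgmem, hgint, hgten⟩ := simpleFunc_seq hf
  have htoLp : Tendsto (fun n => (hgmem n).toLp (g n)) atTop (𝓝 (hf.toLp f)) := by
    rw [tendsto_iff_norm_sub_tendsto_zero]
    have heq : ∀ n, ‖(hgmem n).toLp (g n) - hf.toLp f‖ = (eLpNorm (f - g n) 2 volume).toReal := by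
      intro n
      rw [← MemLp.toLp_sub, Lp.norm_toLp, eLpNorm_sub_comm]
    simp_rw [heq]
    exact toReal_tendsto_zero hgten
  have htoLpMod : Tendsto (fun n => (memLp_mod t (hgmem n)).toLp _) atTop
      (𝓝 ((memLp_mod t hf).toLp _)) := by
    rw [tendsto_iff_norm_sub_tendsto_zero]
    have heq : ∀ n, ‖(memLp_mod t (hgmem n)).toLp _ - (memLp_mod t hf).toLp _‖
        = (eLpNorm (f - g n) 2 volume).toReal := by
      intro n
      rw [← MemLp.toLp_sub, Lp.norm_toLp]
      congr 1
      apply eLpNorm_congr_norm_ae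
      filter_upwards with x
      simp only [Pi.sub_apply]
      rw [← mul_sub, norm_mul, norm_sub_rev]
      rw [Circle.norm_coe, one_mul]
    simp_rw [heq]
    exact toReal_tendsto_zero hgten
  have hn : ∀ n, U ((memLp_mod t (hgmem n)).toLp _) = T (U ((hgmem n).toLp (g n))) := by
    intro n
    apply Lp.ext
    have h1 := hU _ (integrable_mod t (hgint n)) (memLp_mod t (hgmem n))
    have h2 := hU (g n) (hgint n) (hgmem n)
    have h3 := Lp.coeFn_compMeasurePreserving (U ((hgmem n).toLp (g n))) mp
    have h4 : ((U ((hgmem n).toLp (g n)) : ℝ → ℂ) ∘ (fun ξ => ξ - t)) =ᵐ[volume]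
        ((𝓕 (g n)) ∘ (fun ξ => ξ - t)) := mp.quasiMeasurePreserving.ae_eq h2
    filter_upwards [h1, h3, h4] with ξ h1' h3' h4'
    rw [h1', fourier_mod, h3']
    exact h4'.symm
  have hA : Tendsto (fun n => U ((memLp_mod t (hgmem n)).toLp _)) atTop
      (𝓝 (U ((memLp_mod t hf).toLp _))) := (U.continuous.tendsto _).comp htoLpMod
  have hB : Tendsto (fun n => T (U ((hgmem n).toLp (g n)))) atTop
      (𝓝 (T (U (hf.toLp f)))) := by
    rw [tendsto_iff_norm_sub_tendsto_zero]
    have heq : ∀ n, ‖T (U ((hgmem n).toLp (g n))) - T (U (hf.toLp f))‖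
        = ‖(hgmem n).toLp (g n) - hf.toLp f‖ := by
      intro n
      rw [← map_sub, Lp.norm_compMeasurePreserving, ← map_sub, U.norm_map]
    simp_rw [heq]
    exact tendsto_iff_norm_sub_tendsto_zero.1 htoLp
  simp_rw [hn] at hA
  exact tendsto_nhds_unique hA hB

lemma inHardy_mod (hU : IsFourierL2 U) {t : ℝ} (ht : 0 ≤ t) {f : ℝ → ℂ}
    (hf : MemLp f 2 volume) (H : InHardy U (hf.toLp f)) :
    InHardy U ((memLp_mod t hf).toLp _) := by
  unfold InHardy
  rw [key_mod hU t hf]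
  set mp := measurePreserving_sub_right (volume : Measure ℝ) t
  have h3 := Lp.coeFn_compMeasurePreserving (U (hf.toLp f)) mp
  have h4 : ∀ᵐ ξ : ℝ, ξ - t < 0 → (U (hf.toLp f) : ℝ → ℂ) (ξ - t) = 0 :=
    mp.quasiMeasurePreserving.ae H
  filter_upwards [h3, h4] with ξ h3' h4' hξ
  rw [h3']
  exact h4' (lt_of_le_of_lt (sub_le_self ξ ht) hξ)

lemma tendsto_diffquot (x : ℝ) :
    Tendsto (fun n : ℕ => (2 * π * Complex.I * (((n : ℝ) + 1)⁻¹ : ℝ))⁻¹ *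
      ((𝐞 ((((n : ℝ) + 1)⁻¹ : ℝ) * x) : ℂ) - 1)) atTop (𝓝 (x : ℂ)) := by
  have a : ℂ := 0
  set a : ℂ := 2 * π * Complex.I * x with ha
  have hda : HasDerivAt (fun z : ℂ => Complex.exp (a * z)) a 0 := by
    simpa [Function.comp_def] using ((Complex.hasDerivAt_exp (a * 0)).comp 0 ((hasDerivAt_id (0:ℂ)).const_mul a))
  have hslope := hasDerivAt_iff_tendsto_slope.1 hda
  have hseq : Tendsto (fun n : ℕ => ((((n : ℝ) + 1)⁻¹ : ℝ) : ℂ)) atTop (𝓝[≠] (0:ℂ)) := by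
    apply tendsto_nhdsWithin_of_tendsto_nhds_of_eventually_within
    · have : Tendsto (fun n : ℕ => ((n : ℝ) + 1)⁻¹) atTop (𝓝 0) := by
        simpa only [one_div] using tendsto_one_div_add_atTop_nhds_zero_nat (𝕜 := ℝ)
      have := (Complex.continuous_ofReal.tendsto 0).comp this
      simpa [Function.comp_def] using this
    · filter_upwards with n
      simp only [Set.mem_compl_iff, Set.mem_singleton_iff]
      exact_mod_cast Ne.symm (ne_of_lt (by positivity))
  have hcomp := hslope.comp hseq
  have hkey : Tendsto (fun n : ℕ =>
      (Complex.exp (a * ((((n : ℝ) + 1)⁻¹ : ℝ) : ℂ)) - 1) / ((((n : ℝ) + 1)⁻¹ : ℝ) : ℂ))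
      atTop (𝓝 a) := by
    refine hcomp.congr fun n => ?_
    simp [slope_def_field, Complex.exp_zero]
  have hmul := hkey.const_mul ((2 * π * Complex.I)⁻¹)
  have hval : (2 * π * Complex.I)⁻¹ * a = (x : ℂ) := by
    rw [ha]
    field_simp [Complex.I_ne_zero, Real.pi_ne_zero]
  rw [hval] at hmul
  refine hmul.congr fun n => ?_
  have hne : ((((n : ℝ) + 1)⁻¹ : ℝ) : ℂ) ≠ 0 := by
    exact_mod_cast ne_of_gt (by positivity : (0:ℝ) < ((n : ℝ) + 1)⁻¹)
  have hchar : (𝐞 ((((n : ℝ) + 1)⁻¹ : ℝ) * x) : ℂ)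
      = Complex.exp (a * ((((n : ℝ) + 1)⁻¹ : ℝ) : ℂ)) := by
    rw [Real.fourierChar_apply, ha]
    push_cast
    ring_nf
  rw [hchar, mul_inv, div_eq_mul_inv]
  ring

lemma tendsto_eLpNorm_two_zero {F : ℕ → ℝ → ℂ} {b : ℝ → ℂ}
    (hFm : ∀ n, AEStronglyMeasurable (F n) volume)
    (hb : MemLp b 2 volume)
    (hle : ∀ n, ∀ᵐ x ∂(volume : Measure ℝ), ‖F n x‖ ≤ ‖b x‖)
    (hlim : ∀ᵐ x ∂(volume : Measure ℝ), Tendsto (fun n => F n x) atTop (𝓝 0)) :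
    Tendsto (fun n => eLpNorm (F n) 2 volume) atTop (𝓝 0) := by
  have h2 : ∀ f : ℝ → ℂ, eLpNorm f 2 volume
      = (∫⁻ x, (‖f x‖₊ : ℝ≥0∞) ^ (2 : ℕ)) ^ (1 / (2:ℝ)) := by
    intro f
    rw [eLpNorm_eq_lintegral_rpow_enorm_toReal two_ne_zero (by norm_num)]
    norm_num
    rfl
  have hDCT : Tendsto (fun n => ∫⁻ x, (‖F n x‖₊ : ℝ≥0∞) ^ (2 : ℕ)) atTop (𝓝 0) := by
    have h0 : (0 : ℝ≥0∞) = ∫⁻ (x : ℝ), (fun _ : ℝ => (0:ℝ≥0∞)) x := by simp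
    rw [h0]
    apply tendsto_lintegral_of_dominated_convergence' (f := fun _ : ℝ => (0:ℝ≥0∞))
      (bound := fun x => (‖b x‖₊ : ℝ≥0∞) ^ (2:ℕ))
    · exact fun n => ((hFm n).enorm).pow_const 2
    · intro n
      filter_upwards [hle n] with x hx
      have h1 : (‖F n x‖₊ : ℝ≥0∞) ≤ (‖b x‖₊ : ℝ≥0∞) := by
        exact_mod_cast hx
      exact pow_le_pow_left₀ zero_le h1 2
    · have : ∫⁻ x, (‖b x‖₊ : ℝ≥0∞) ^ ((2:ℝ≥0∞).toReal) < ∞ := lintegral_rpow_enorm_lt_top_of_eLpNorm_lt_top two_ne_zero (by norm_num : (2:ℝ≥0∞) ≠ ∞) hb.2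
      have heq : ∀ x : ℝ, (‖b x‖₊ : ℝ≥0∞) ^ ((2:ℝ≥0∞).toReal) = (‖b x‖₊ : ℝ≥0∞) ^ (2:ℕ) := by
        intro x
        rw [show ((2:ℝ≥0∞).toReal) = ((2:ℕ):ℝ) by norm_num, ENNReal.rpow_natCast]
      simp_rw [heq] at this
      exact this.ne
    · filter_upwards [hlim] with x hx
      have h1 : Tendsto (fun n => (‖F n x‖₊ : ℝ≥0∞)) atTop (𝓝 ((0 : NNReal) : ℝ≥0∞)) :=
        ENNReal.tendsto_coe.2 (by simpa using hx.nnnorm)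
      have h2 := ENNReal.Tendsto.pow (n := 2) h1
      simpa using h2
  have := hDCT.ennrpow_const (1 / (2:ℝ))
  rw [ENNReal.zero_rpow_of_pos (by norm_num)] at this
  simp_rw [← h2] at this
  exact this

lemma norm_exp_mul_I_sub_one_le (s : ℝ) : ‖Complex.exp ((s:ℂ) * Complex.I) - 1‖ ≤ |s| := by
  have h1 : Complex.exp ((s:ℂ) * Complex.I) - 1
      = ((Real.cos s - 1 : ℝ) : ℂ) + ((Real.sin s : ℝ) : ℂ) * Complex.I := by
    rw [Complex.exp_mul_I, ← Complex.ofReal_cos, ← Complex.ofReal_sin]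
    push_cast
    ring
  rw [h1, Complex.norm_add_mul_I]
  rw [← Real.sqrt_sq_eq_abs]
  apply Real.sqrt_le_sqrt
  have hcos := Real.one_sub_sq_div_two_le_cos (x := s)
  have hsc := Real.sin_sq_add_cos_sq s
  nlinarith [Real.cos_le_one s]

lemma norm_char_sub_one_le (r : ℝ) : ‖(𝐞 r : ℂ) - 1‖ ≤ 2 * π * |r| := by
  rw [Real.fourierChar_apply]
  have := norm_exp_mul_I_sub_one_le (2 * π * r)
  calc ‖Complex.exp ((2 * π * r : ℝ) * Complex.I) - 1‖ ≤ |2 * π * r| := this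
    _ = 2 * π * |r| := by
        rw [abs_mul, abs_mul, _root_.abs_of_nonneg (by norm_num : (0:ℝ) ≤ 2),
          _root_.abs_of_nonneg Real.pi_pos.le]

lemma inHardy_sub {f g : L2R} (hf : InHardy U f) (hg : InHardy U g) : InHardy U (f - g) := by
  have h3 : (U (f - g) : ℝ → ℂ) =ᵐ[volume] fun x => (U f : ℝ → ℂ) x - (U g : ℝ → ℂ) x := by
    rw [map_sub]; exact Lp.coeFn_sub _ _
  filter_upwards [hf, hg, h3] with x hf' hg' h3' hx
  rw [h3', hf' hx, hg' hx, sub_zero]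

lemma inHardy_mul_id (hU : IsFourierL2 U) {h : ℝ → ℂ} (hh : MemLp h 2 volume)
    (hH : InHardy U (hh.toLp h))
    (hxh : MemLp (fun x : ℝ => (x : ℂ) * h x) 2 volume) :
    InHardy U (hxh.toLp _) := by
  set c : ℕ → ℝ := fun n => ((n:ℝ)+1)⁻¹ with hc
  have hcpos : ∀ n, 0 < c n := fun n => by positivity
  set g : ℕ → ℝ → ℂ :=
    fun n => (2*(π:ℂ)*Complex.I*((c n : ℝ):ℂ))⁻¹ •
      ((fun x => (𝐞 ((c n) * x) : ℂ) * h x) - h) with hg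
  have gmem : ∀ n, MemLp (g n) 2 volume := fun n =>
    ((memLp_mod (c n) hh).sub hh).const_smul _
  have gH : ∀ n, InHardy U ((gmem n).toLp _) := by
    intro n
    have h1 : InHardy U ((memLp_mod (c n) hh).toLp _) :=
      inHardy_mod hU (hcpos n).le hh hH
    have key : (gmem n).toLp (g n)
        = (2*(π:ℂ)*Complex.I*((c n : ℝ):ℂ))⁻¹ • ((memLp_mod (c n) hh).toLp _ - hh.toLp h) := by
      rw [← MemLp.toLp_sub, ← MemLp.toLp_const_smul]
    rw [key]
    exact inHardy_smul _ (inHardy_sub h1 hH)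
  -- pointwise bound : ‖g n x - x * h x‖ ≤ ‖3 * (x * h x)‖
  have hbd : ∀ n x, ‖g n x - (x:ℂ) * h x‖ ≤ ‖(3:ℂ) * ((x:ℂ) * h x)‖ := by
    intro n x
    have hq : ‖(2*(π:ℂ)*Complex.I*((c n : ℝ):ℂ))⁻¹ * ((𝐞 ((c n) * x) : ℂ) - 1)‖ ≤ |x| := by
      rw [norm_mul, norm_inv]
      have hnorm : ‖(2*(π:ℂ)*Complex.I*((c n : ℝ):ℂ))‖ = 2 * π * c n := by
        simp [norm_mul, Complex.norm_real, _root_.abs_of_nonneg Real.pi_pos.le,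
          _root_.abs_of_nonneg (hcpos n).le]
      rw [hnorm]
      rw [inv_mul_le_iff₀ (by positivity)]
      calc ‖(𝐞 ((c n) * x) : ℂ) - 1‖ ≤ 2 * π * |c n * x| := norm_char_sub_one_le _
        _ = 2 * π * c n * |x| := by rw [abs_mul, _root_.abs_of_nonneg (hcpos n).le]; ring
    have hgx : g n x - (x:ℂ) * h x
        = ((2*(π:ℂ)*Complex.I*((c n : ℝ):ℂ))⁻¹ * ((𝐞 ((c n) * x) : ℂ) - 1) - (x:ℂ)) * h x := by
      simp only [hg, Pi.smul_apply, Pi.sub_apply, smul_eq_mul]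
      ring
    rw [hgx, norm_mul, norm_mul, norm_mul]
    have h3 : ‖(2*(π:ℂ)*Complex.I*((c n : ℝ):ℂ))⁻¹ * ((𝐞 ((c n) * x) : ℂ) - 1) - (x:ℂ)‖
        ≤ |x| + |x| := by
      refine (norm_sub_le _ _).trans ?_
      have hxe : ‖((x:ℝ):ℂ)‖ = |x| := by simp
      exact add_le_add hq (le_of_eq hxe)
    calc ‖(2*(π:ℂ)*Complex.I*((c n : ℝ):ℂ))⁻¹ * ((𝐞 ((c n) * x) : ℂ) - 1) - (x:ℂ)‖ * ‖h x‖
        ≤ (|x| + |x|) * ‖h x‖ := by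
          exact mul_le_mul_of_nonneg_right h3 (norm_nonneg _)
      _ ≤ ‖(3:ℂ)‖ * (‖(x:ℂ)‖ * ‖h x‖) := by
          simp only [Complex.norm_ofNat, Complex.norm_real, Real.norm_eq_abs]
          nlinarith [norm_nonneg (h x), abs_nonneg x]
  -- pointwise convergence of g n x → x * h x
  have hptw : ∀ x : ℝ, Tendsto (fun n => g n x - (x:ℂ) * h x) atTop (𝓝 0) := by
    intro x
    have h1 := tendsto_diffquot x
    have h2 : Tendsto (fun n => ((2*(π:ℂ)*Complex.I*((c n : ℝ):ℂ))⁻¹ *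
        ((𝐞 ((c n) * x) : ℂ) - 1) - (x:ℂ)) * h x) atTop (𝓝 0) := by
      have h2' := ((h1.sub_const (x:ℂ)).mul_const (h x))
      have h0 : ((x:ℂ) - (x:ℂ)) * h x = 0 := by ring
      rw [h0] at h2'
      exact h2'
    refine h2.congr fun n => ?_
    simp only [hg, Pi.smul_apply, Pi.sub_apply, smul_eq_mul]
    ring
  -- Lp convergence
  have hconv : Tendsto (fun n => (gmem n).toLp (g n)) atTop (𝓝 (hxh.toLp _)) := by
    rw [tendsto_iff_norm_sub_tendsto_zero]
    have heq : ∀ n, ‖(gmem n).toLp (g n) - hxh.toLp _‖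
        = (eLpNorm (g n - fun x : ℝ => (x:ℂ) * h x) 2 volume).toReal := by
      intro n; rw [← MemLp.toLp_sub, Lp.norm_toLp]
    simp_rw [heq]
    apply toReal_tendsto_zero
    apply tendsto_eLpNorm_two_zero (b := fun x => (3:ℂ) * ((x:ℂ) * h x))
    · exact fun n => ((gmem n).sub hxh).1
    · exact hxh.const_mul 3
    · intro n; filter_upwards with x; exact hbd n x
    · filter_upwards with x; exact hptw x
  exact inHardy_of_tendsto gH hconv

lemma poly_lower_bound (P : Polynomial ℂ) (hP : P ≠ 0) :
    ∃ C R : ℝ, 0 ≤ C ∧ 0 ≤ R ∧ ∀ x : ℝ, R ≤ |x| →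
      |x| ^ P.natDegree ≤ C * ‖P.eval (x:ℂ)‖ := by
  set n := P.natDegree with hn
  set a := P.leadingCoeff with haa
  have ha : a ≠ 0 := Polynomial.leadingCoeff_ne_zero.2 hP
  have ha' : 0 < ‖a‖ := norm_pos_iff.2 ha
  set B : ℝ := ∑ i ∈ Finset.range n, ‖P.coeff i‖ with hB
  have hBnn : 0 ≤ B := Finset.sum_nonneg fun i _ => norm_nonneg _
  refine ⟨2 / ‖a‖, max 1 (2 * B / ‖a‖), by positivity,
    le_trans zero_le_one (le_max_left _ _), ?_⟩
  intro x hx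
  have hx1 : 1 ≤ |x| := le_trans (le_max_left _ _) hx
  have hx2 : 2 * B / ‖a‖ ≤ |x| := le_trans (le_max_right _ _) hx
  have hxpos : 0 < |x| := lt_of_lt_of_le zero_lt_one hx1
  have hdecomp : P.eval (x:ℂ)
      = (∑ i ∈ Finset.range n, P.coeff i * (x:ℂ) ^ i) + a * (x:ℂ) ^ n := by
    rw [Polynomial.eval_eq_sum_range, Finset.sum_range_succ, Polynomial.coeff_natDegree, ← haa, ← hn]
  have hS : ‖∑ i ∈ Finset.range n, P.coeff i * (x:ℂ) ^ i‖ ≤ (‖a‖ / 2) * |x| ^ n := by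
    rcases Nat.eq_zero_or_pos n with h0 | hpos
    · rw [h0]
      simp only [Finset.range_zero, Finset.sum_empty, norm_zero, pow_zero, mul_one]
      positivity
    · have hstep : n - 1 + 1 = n := Nat.succ_pred_eq_of_pos hpos
      calc ‖∑ i ∈ Finset.range n, P.coeff i * (x:ℂ)^i‖
          ≤ ∑ i ∈ Finset.range n, ‖P.coeff i‖ * |x| ^ i := by
            refine (norm_sum_le _ _).trans (Finset.sum_le_sum fun i _ => ?_)
            rw [norm_mul, norm_pow, Complex.norm_real, Real.norm_eq_abs]
        _ ≤ ∑ i ∈ Finset.range n, ‖P.coeff i‖ * |x| ^ (n - 1) := by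
            refine Finset.sum_le_sum fun i hi => ?_
            have hle : |x| ^ i ≤ |x| ^ (n-1) :=
              pow_le_pow_right₀ hx1 (Nat.le_pred_of_lt (Finset.mem_range.1 hi))
            exact mul_le_mul_of_nonneg_left hle (norm_nonneg _)
        _ = B * |x| ^ (n-1) := by rw [← Finset.sum_mul]
        _ ≤ (‖a‖/2) * |x| * |x| ^ (n-1) := by
            refine mul_le_mul_of_nonneg_right ?_ (by positivity)
            rw [div_le_iff₀ ha'] at hx2
            linarith
        _ = (‖a‖/2) * |x| ^ n := by
            rw [mul_assoc, ← pow_succ' (|x|) (n-1), hstep]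
  have hmain : (‖a‖/2) * |x| ^ n ≤ ‖P.eval (x:ℂ)‖ := by
    have h1 : ‖a * (x:ℂ) ^ n‖ = ‖a‖ * |x| ^ n := by
      rw [norm_mul, norm_pow, Complex.norm_real, Real.norm_eq_abs]
    have h2 : ‖a * (x:ℂ)^n‖ ≤ ‖P.eval (x:ℂ)‖
        + ‖∑ i ∈ Finset.range n, P.coeff i * (x:ℂ) ^ i‖ := by
      rw [hdecomp]
      set S := ∑ i ∈ Finset.range n, P.coeff i * (x:ℂ) ^ i
      calc ‖a * (x:ℂ)^n‖ = ‖(S + a * (x:ℂ)^n) - S‖ := by ring_nf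
        _ ≤ ‖S + a * (x:ℂ)^n‖ + ‖S‖ := norm_sub_le _ _
    rw [h1] at h2
    linarith
  rw [div_mul_eq_mul_div, le_div_iff₀ ha']
  linarith

lemma memLp_monomial_top {h : ℝ → ℂ} (hh : MemLp h 2 volume) (P : Polynomial ℂ) (hP : P ≠ 0)
    (hPh : MemLp (fun x : ℝ => P.eval (x : ℂ) * h x) 2 volume) :
    MemLp (fun x : ℝ => (x:ℂ) ^ P.natDegree * h x) 2 volume := by
  obtain ⟨C, R, hC, hR, hbound⟩ := poly_lower_bound P hP
  set n := P.natDegree with hn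
  set g : ℝ → ℝ := fun x => R^n * ‖h x‖ + C * ‖P.eval (x:ℂ) * h x‖ with hg
  have hgmem : MemLp g 2 volume := (hh.norm.const_mul _).add (hPh.norm.const_mul _)
  refine MemLp.of_le hgmem ?_ ?_
  · exact ((Complex.continuous_ofReal.pow n).aestronglyMeasurable).mul hh.1
  · filter_upwards with x
    have hxn : ‖(x:ℂ)^n * h x‖ = |x|^n * ‖h x‖ := by
      rw [norm_mul, norm_pow, Complex.norm_real, Real.norm_eq_abs]
    rw [Real.norm_eq_abs]
    refine le_trans ?_ (le_abs_self _)
    show ‖(x:ℂ)^n * h x‖ ≤ R^n * ‖h x‖ + C * ‖P.eval (x:ℂ) * h x‖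
    rw [hxn]
    rcases le_or_gt R |x| with hle | hlt
    · have h1 : |x|^n * ‖h x‖ ≤ C * ‖P.eval (x:ℂ)‖ * ‖h x‖ :=
        mul_le_mul_of_nonneg_right (hbound x hle) (norm_nonneg _)
      have h2 : C * ‖P.eval (x:ℂ)‖ * ‖h x‖ = C * ‖P.eval (x:ℂ) * h x‖ := by
        rw [norm_mul]; ring
      nlinarith [norm_nonneg (h x), mul_nonneg (pow_nonneg hR n) (norm_nonneg (h x))]
    · have h1 : |x|^n ≤ R^n := pow_le_pow_left₀ (abs_nonneg x) hlt.le n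
      nlinarith [norm_nonneg (h x), mul_nonneg hC (norm_nonneg (P.eval (x:ℂ) * h x))]

lemma memLp_monomial {h : ℝ → ℂ} (hh : MemLp h 2 volume) {n : ℕ}
    (htop : MemLp (fun x : ℝ => (x:ℂ) ^ n * h x) 2 volume) {k : ℕ} (hk : k ≤ n) :
    MemLp (fun x : ℝ => (x:ℂ) ^ k * h x) 2 volume := by
  set g : ℝ → ℝ := fun x => ‖h x‖ + ‖(x:ℂ)^n * h x‖ with hg
  have hgmem : MemLp g 2 volume := hh.norm.add htop.norm
  refine MemLp.of_le hgmem ?_ ?_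
  · exact ((Complex.continuous_ofReal.pow k).aestronglyMeasurable).mul hh.1
  · filter_upwards with x
    have hxk : ‖(x:ℂ)^k * h x‖ = |x|^k * ‖h x‖ := by
      rw [norm_mul, norm_pow, Complex.norm_real, Real.norm_eq_abs]
    have hxn : ‖(x:ℂ)^n * h x‖ = |x|^n * ‖h x‖ := by
      rw [norm_mul, norm_pow, Complex.norm_real, Real.norm_eq_abs]
    rw [Real.norm_eq_abs]
    refine le_trans ?_ (le_abs_self _)
    show ‖(x:ℂ)^k * h x‖ ≤ ‖h x‖ + ‖(x:ℂ)^n * h x‖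
    rw [hxk, hxn]
    rcases le_or_gt (|x|) 1 with hle | hlt
    · have h1 : |x|^k ≤ 1 := pow_le_one₀ (abs_nonneg x) hle
      nlinarith [norm_nonneg (h x), mul_nonneg (pow_nonneg (abs_nonneg x) n) (norm_nonneg (h x))]
    · have h1 : |x|^k ≤ |x|^n := pow_le_pow_right₀ hlt.le hk
      nlinarith [norm_nonneg (h x)]

lemma inHardy_zero : InHardy U (0 : L2R) := by
  have h0 : (U (0 : L2R) : ℝ → ℂ) =ᵐ[volume] 0 := by
    rw [map_zero]; exact Lp.coeFn_zero _ _ _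
  filter_upwards [h0] with x hx _
  rw [hx]; rfl

lemma inHardy_finsum {F : ℕ → ℝ → ℂ} (s : Finset ℕ)
    (hmem : ∀ k ∈ s, MemLp (F k) 2 volume)
    (hH : ∀ k (hk : k ∈ s), InHardy U ((hmem k hk).toLp _)) :
    ∃ hmem' : MemLp (fun x => ∑ k ∈ s, F k x) 2 volume, InHardy U (hmem'.toLp _) := by
  classical
  induction s using Finset.induction with
  | empty =>
      have hz : MemLp (fun x : ℝ => ∑ k ∈ (∅ : Finset ℕ), F k x) 2 volume := by
        simpa using (MemLp.zero : MemLp (0 : ℝ → ℂ) 2 volume)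
      refine ⟨hz, ?_⟩
      have this' : (fun x : ℝ => ∑ k ∈ (∅ : Finset ℕ), F k x) =ᵐ[volume] (0 : ℝ → ℂ) := by
        filter_upwards with x; simp
      have h2 := MemLp.toLp_congr hz MemLp.zero this'
      rw [h2, MemLp.toLp_zero]
      exact inHardy_zero
  | @insert a s hnot ih =>
      have hmem' : ∀ k ∈ s, MemLp (F k) 2 volume :=
        fun k hk => hmem k (Finset.mem_insert_of_mem hk)
      have hH' : ∀ k (hk : k ∈ s), InHardy U ((hmem' k hk).toLp _) :=
        fun k hk => hH k (Finset.mem_insert_of_mem hk)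
      obtain ⟨m1, H1⟩ := ih hmem' hH'
      have hamem := hmem a (Finset.mem_insert_self a s)
      have haH := hH a (Finset.mem_insert_self a s)
      have heq : (fun x : ℝ => ∑ k ∈ insert a s, F k x)
          = fun x => F a x + ∑ k ∈ s, F k x := by
        funext x; rw [Finset.sum_insert hnot]
      have hmem2 : MemLp (fun x : ℝ => ∑ k ∈ insert a s, F k x) 2 volume := by
        rw [heq]; exact hamem.add m1
      refine ⟨hmem2, ?_⟩
      have h3 : hmem2.toLp _ = hamem.toLp (F a) + m1.toLp _ := by
        rw [← MemLp.toLp_add]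
        exact MemLp.toLp_congr _ _ (by rw [heq]; rfl)
      rw [h3]
      exact inHardy_add haH H1

/-- If h ∈ H₊ and P·h ∈ L²(ℝ) for a polynomial P, then P·h ∈ H₊. -/
theorem poly_mul_hardy_mem_hardy
    (U : L2R ≃ₗᵢ[ℂ] L2R) (hU : IsFourierL2 U)
    (h : ℝ → ℂ) (hh : MeasureTheory.MemLp h 2 volume)
    (hH : InHardy U (hh.toLp h))
    (P : Polynomial ℂ)
    (hPh : MeasureTheory.MemLp (fun x : ℝ => P.eval (x : ℂ) * h x) 2 volume) :
    InHardy U (hPh.toLp _) := by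
  by_cases hP : P = 0
  · subst hP
    have heq : (fun x : ℝ => Polynomial.eval (x:ℂ) (0 : Polynomial ℂ) * h x)
        =ᵐ[volume] (0 : ℝ → ℂ) := by
      filter_upwards with x; simp
    rw [MemLp.toLp_congr hPh MemLp.zero heq, MemLp.toLp_zero]
    exact inHardy_zero
  · set n := P.natDegree with hn
    have htop : MemLp (fun x : ℝ => (x:ℂ)^n * h x) 2 volume := memLp_monomial_top hh P hP hPh
    have mono_mem : ∀ k, k ≤ n → MemLp (fun x : ℝ => (x:ℂ)^k * h x) 2 volume :=
      fun k hk => memLp_monomial hh htop hk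
    have mono_hardy : ∀ k (hk : k ≤ n), InHardy U ((mono_mem k hk).toLp _) := by
      intro k
      induction k with
      | zero =>
          intro hk
          have heq : h =ᵐ[volume] (fun x : ℝ => (x:ℂ)^0 * h x) := by
            filter_upwards with x; simp
          exact inHardy_congr hh (mono_mem 0 hk) heq hH
      | succ k ih =>
          intro hk
          have hk' : k ≤ n := Nat.le_of_succ_le hk
          have hxh : MemLp (fun x : ℝ => (x:ℂ) * ((x:ℂ)^k * h x)) 2 volume := by
            refine MemLp.ae_eq ?_ (mono_mem (k+1) hk)
            filter_upwards with x; ring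
          have hmid := inHardy_mul_id hU (mono_mem k hk') (ih hk') hxh
          exact inHardy_congr hxh (mono_mem (k+1) hk) (by filter_upwards with x; ring) hmid
    set F : ℕ → ℝ → ℂ := fun k x => P.coeff k * ((x:ℂ)^k * h x) with hF
    have Fmem : ∀ k ∈ Finset.range (n+1), MemLp (F k) 2 volume := fun k hk =>
      (mono_mem k (Nat.lt_succ_iff.1 (Finset.mem_range.1 hk))).const_mul _
    have FH : ∀ k (hk : k ∈ Finset.range (n+1)), InHardy U ((Fmem k hk).toLp _) := by
      intro k hk
      have hkn := Nat.lt_succ_iff.1 (Finset.mem_range.1 hk)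
      have key : (Fmem k hk).toLp _ = (P.coeff k) • ((mono_mem k hkn).toLp _) := by
        rw [← MemLp.toLp_const_smul]
        exact MemLp.toLp_congr _ _ (by filter_upwards with x; simp [hF, smul_eq_mul])
      rw [key]
      exact inHardy_smul _ (mono_hardy k hkn)
    obtain ⟨hmem', H'⟩ := inHardy_finsum (Finset.range (n+1)) Fmem FH
    have heq2 : (fun x : ℝ => ∑ k ∈ Finset.range (n+1), F k x)
        =ᵐ[volume] (fun x : ℝ => P.eval (x:ℂ) * h x) := by
      filter_upwards with x
      rw [Polynomial.eval_eq_sum_range, Finset.sum_mul]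
      exact Finset.sum_congr rfl fun i _ => by simp only [hF]; ring
    rw [← MemLp.toLp_congr hmem' hPh heq2]
    exact H'
end
end

section
/- Let P, Q be nonzero polynomials with no common zeros, and h ∈ H₊ such that (P/Q)·h ∈ H₊. Then h/Q ∈ H₊. -/
open MeasureTheory Complex Real Set FourierTransform
open scoped ENNReal ComplexConjugate
open scoped ContDiff

noncomputable section

lemma myFlip (f g : ℝ → ℂ) (hf : Integrable f) (hg : Integrable g) :
    ∫ x, 𝓕 f x * g x = ∫ x, f x * 𝓕 g x := by
  have hL : Continuous fun p : ℝ × ℝ => (innerₗ ℝ) p.1 p.2 := by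
    simp
    exact continuous_snd.mul continuous_fst
  have := VectorFourier.integral_fourierIntegral_smul_eq_flip (e := 𝐞)
    (μ := (volume : Measure ℝ)) (ν := (volume : Measure ℝ)) (L := innerₗ ℝ)
    Real.continuous_fourierChar hL hf hg
  rw [flip_innerₗ] at this
  simp only [smul_eq_mul] at this
  exact this

lemma myFourier_smul (a : ℂ) (f : ℝ → ℂ) (w : ℝ) :
    𝓕 (fun x => a * f x) w = a * 𝓕 f w := by
  simp [Real.fourier_eq, Circle.smul_def, mul_left_comm,
    MeasureTheory.integral_const_mul]

lemma myFourier_add {f g : ℝ → ℂ} (hf : Integrable f) (hg : Integrable g) (w : ℝ) :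
    𝓕 (fun x => f x + g x) w = 𝓕 f w + 𝓕 g w := by
  have h1 := (Real.fourierIntegral_convergent_iff (f := f) (w := w)).2 hf
  have h2 := (Real.fourierIntegral_convergent_iff (f := g) (w := w)).2 hg
  simp only [Real.fourier_eq, smul_add]
  exact integral_add h1 h2

lemma test_int {φ : ℝ → ℂ} (h1 : ContDiff ℝ ∞ φ) (h2 : HasCompactSupport φ) :
    Integrable φ := h1.continuous.integrable_of_hasCompactSupport h2

lemma test_mem2 {φ : ℝ → ℂ} (h1 : ContDiff ℝ ∞ φ) (h2 : HasCompactSupport φ) :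
    MemLp φ 2 volume := h1.continuous.memLp_of_hasCompactSupport h2

lemma memℒp_conj {f : ℝ → ℂ} (hf : MemLp f 2 volume) :
    MemLp (fun x => conj (f x)) 2 volume :=
  ⟨continuous_star.comp_aestronglyMeasurable hf.1, by
    rw [eLpNorm_congr_norm_ae (g := f) (Filter.Eventually.of_forall fun x => by simp)]
    exact hf.2⟩

lemma myMulInt {f g : ℝ → ℂ} (hf : MemLp f 2 volume) (hg : MemLp g 2 volume) :
    Integrable (fun x => f x * g x) := by
  have := L2.integrable_inner (𝕜 := ℂ) ((memℒp_conj hf).toLp _) (hg.toLp g)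
  refine this.congr ?_
  filter_upwards [MemLp.coeFn_toLp (memℒp_conj hf), MemLp.coeFn_toLp hg] with x h1 h2
  simp [RCLike.inner_apply, h1, h2, mul_comm]

lemma pair_bound {f g : ℝ → ℂ} (hf : MemLp f 2 volume) (hg : MemLp g 2 volume) :
    ‖∫ x, f x * g x‖ ≤ (eLpNorm f 2 volume).toReal * (eLpNorm g 2 volume).toReal := by
  have h1 : ∫ x, f x * g x = @inner ℂ _ _ ((memℒp_conj hf).toLp _) (hg.toLp g) := by
    rw [L2.inner_def]
    refine integral_congr_ae ?_
    filter_upwards [MemLp.coeFn_toLp (memℒp_conj hf), MemLp.coeFn_toLp hg] with x h1 h2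
    simp [RCLike.inner_apply, h1, h2, mul_comm]
  rw [h1]
  refine (norm_inner_le_norm _ _).trans ?_
  rw [Lp.norm_toLp, Lp.norm_toLp,
    eLpNorm_congr_norm_ae (g := f) (Filter.Eventually.of_forall fun x => by simp)]

lemma U_pairing (U : L2R ≃ₗᵢ[ℂ] L2R) (hU : IsFourierL2 U) {f φ : ℝ → ℂ}
    (hf : MemLp f 2 volume) (hφi : Integrable φ) (hφ2 : MemLp φ 2 volume)
    (hFφ2 : MemLp (𝓕 φ) 2 volume) :
    ∫ x, (U (hf.toLp f) : ℝ → ℂ) x * φ x = ∫ x, f x * 𝓕 φ x := by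
  apply eq_of_forall_dist_le
  intro ε hε
  set C : ℝ := (eLpNorm φ 2 volume).toReal + (eLpNorm (𝓕 φ) 2 volume).toReal + 1 with hC
  have hCpos : 0 < C := by positivity
  have hε' : ENNReal.ofReal (ε / C) ≠ 0 := by
    simp [ENNReal.ofReal_eq_zero, not_le, div_pos hε hCpos]
  obtain ⟨g, hgsupp, hgnorm, hgcont, hgmem⟩ :=
    hf.exists_hasCompactSupport_eLpNorm_sub_le (by norm_num) hε'
  have hgi : Integrable g := hgcont.integrable_of_hasCompactSupport hgsupp
  -- exact identity for g
  have key : ∫ x, (U (hgmem.toLp g) : ℝ → ℂ) x * φ x = ∫ x, g x * 𝓕 φ x := by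
    have h1 : ∫ x, (U (hgmem.toLp g) : ℝ → ℂ) x * φ x = ∫ x, 𝓕 g x * φ x := by
      refine integral_congr_ae ?_
      filter_upwards [hU g hgi hgmem] with x hx
      rw [hx]
    rw [h1]
    exact myFlip g φ hgi hφi
  -- distance estimates
  have hd : (eLpNorm (f - g) 2 volume).toReal ≤ ε / C := by
    refine ENNReal.toReal_le_of_le_ofReal (le_of_lt (div_pos hε hCpos)) hgnorm
  have e1 : ‖(∫ x, (U (hf.toLp f) : ℝ → ℂ) x * φ x) -
      ∫ x, (U (hgmem.toLp g) : ℝ → ℂ) x * φ x‖ ≤ (ε / C) * (eLpNorm φ 2 volume).toReal := by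
    have hsub : ∫ x, (U (hf.toLp f) : ℝ → ℂ) x * φ x - (U (hgmem.toLp g) : ℝ → ℂ) x * φ x
        = (∫ x, (U (hf.toLp f) : ℝ → ℂ) x * φ x) - ∫ x, (U (hgmem.toLp g) : ℝ → ℂ) x * φ x :=
      integral_sub (myMulInt (Lp.memLp _) hφ2) (myMulInt (Lp.memLp _) hφ2)
    rw [← hsub]
    have : ∀ᵐ x : ℝ, (U (hf.toLp f) : ℝ → ℂ) x * φ x - (U (hgmem.toLp g) : ℝ → ℂ) x * φ x
        = (U (hf.toLp f) - U (hgmem.toLp g) : L2R) x * φ x := by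
      filter_upwards [Lp.coeFn_sub (U (hf.toLp f)) (U (hgmem.toLp g))] with x hx
      rw [hx]; simp [sub_mul]
    rw [integral_congr_ae this]
    refine (pair_bound (Lp.memLp _) hφ2).trans ?_
    gcongr
    have : eLpNorm ((U (hf.toLp f) - U (hgmem.toLp g) : L2R) : ℝ → ℂ) 2 volume
        = ‖U (hf.toLp f) - U (hgmem.toLp g)‖₊ := by
      rw [Lp.nnnorm_def]
      rw [ENNReal.coe_toNNReal (Lp.eLpNorm_ne_top _)]
    rw [this, ← LinearIsometryEquiv.map_sub]
    have h2 : ‖U (hf.toLp f - hgmem.toLp g)‖ = (eLpNorm (f - g) 2 volume).toReal := by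
      rw [LinearIsometryEquiv.norm_map, ← MemLp.toLp_sub, Lp.norm_toLp]
    simp only [ENNReal.coe_toReal, coe_nnnorm, h2]
    exact hd
  have e2 : ‖(∫ x, g x * 𝓕 φ x) - ∫ x, f x * 𝓕 φ x‖
      ≤ (ε / C) * (eLpNorm (𝓕 φ) 2 volume).toReal := by
    have hsub : ∫ x, g x * 𝓕 φ x - f x * 𝓕 φ x
        = (∫ x, g x * 𝓕 φ x) - ∫ x, f x * 𝓕 φ x :=
      integral_sub (myMulInt hgmem hFφ2) (myMulInt hf hFφ2)
    rw [← hsub]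
    have : (fun x => g x * 𝓕 φ x - f x * 𝓕 φ x) = fun x => (g - f) x * 𝓕 φ x := by
      funext x; simp [sub_mul]
    rw [this]
    refine (pair_bound (hgmem.sub hf) hFφ2).trans ?_
    gcongr
    have : eLpNorm (g - f) 2 volume = eLpNorm (f - g) 2 volume := by
      rw [← eLpNorm_neg]; congr 1; abel
    rw [this]
    exact hd
  calc dist (∫ x, (U (hf.toLp f) : ℝ → ℂ) x * φ x) (∫ x, f x * 𝓕 φ x)
      ≤ ‖(∫ x, (U (hf.toLp f) : ℝ → ℂ) x * φ x) - ∫ x, (U (hgmem.toLp g) : ℝ → ℂ) x * φ x‖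
        + ‖(∫ x, g x * 𝓕 φ x) - ∫ x, f x * 𝓕 φ x‖ := by
        rw [dist_eq_norm, ← key]
        exact (norm_sub_le_norm_sub_add_norm_sub _ _ _).trans (by rw [key])
    _ ≤ (ε / C) * (eLpNorm φ 2 volume).toReal + (ε / C) * (eLpNorm (𝓕 φ) 2 volume).toReal :=
        add_le_add e1 e2
    _ = (ε / C) * ((eLpNorm φ 2 volume).toReal + (eLpNorm (𝓕 φ) 2 volume).toReal) := by ring
    _ ≤ (ε / C) * C := by
        refine mul_le_mul_of_nonneg_left ?_ (le_of_lt (div_pos hε hCpos))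
        rw [hC]; linarith
    _ = ε := div_mul_cancel₀ ε (ne_of_gt hCpos)

/-- Plancherel for test functions, deduced from `U`. -/
lemma fourier_mem2 (U : L2R ≃ₗᵢ[ℂ] L2R) (hU : IsFourierL2 U) {φ : ℝ → ℂ}
    (hφi : Integrable φ) (hφ2 : MemLp φ 2 volume) : MemLp (𝓕 φ) 2 volume :=
  (Lp.memLp (U (hφ2.toLp φ))).ae_eq (hU φ hφi hφ2)

/-- Characterization of the Hardy space via test functions supported in `(-∞,0)`. -/
lemma hardy_iff (U : L2R ≃ₗᵢ[ℂ] L2R) (hU : IsFourierL2 U) {f : ℝ → ℂ}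
    (hf : MemLp f 2 volume) :
    InHardy U (hf.toLp f) ↔ ∀ φ : ℝ → ℂ, ContDiff ℝ ∞ φ → HasCompactSupport φ →
      tsupport φ ⊆ Iio 0 → ∫ x, f x * 𝓕 φ x = 0 := by
  constructor
  · intro hH φ hφ1 hφ2 hφ3
    rw [← U_pairing U hU hf (test_int hφ1 hφ2) (test_mem2 hφ1 hφ2)
      (fourier_mem2 U hU (test_int hφ1 hφ2) (test_mem2 hφ1 hφ2))]
    have : ∀ᵐ x : ℝ, (U (hf.toLp f) : ℝ → ℂ) x * φ x = 0 := by
      filter_upwards [hH] with x hx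
      by_cases hx0 : x < 0
      · rw [hx hx0, zero_mul]
      · rw [image_eq_zero_of_notMem_tsupport (fun hmem => hx0 (hφ3 hmem)), mul_zero]
    rw [integral_congr_ae this, integral_zero]
  · intro hvan
    have := (isOpen_Iio (a := (0:ℝ))).ae_eq_zero_of_integral_contDiff_smul_eq_zero
      (f := ((U (hf.toLp f) : L2R) : ℝ → ℂ)) (μ := volume)
      (((Lp.memLp _).locallyIntegrable (by norm_num)).locallyIntegrableOn _) ?_
    · filter_upwards [this] with x hx hx0
      exact hx hx0
    · intro g hg1 hg2 hg3
      have hφ1 : ContDiff ℝ ∞ (fun x => (g x : ℂ)) := Complex.ofRealCLM.contDiff.comp hg1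
      have hφ2 : HasCompactSupport (fun x => (g x : ℂ)) := by
        apply hg2.comp_left (g := fun r : ℝ => (r : ℂ)) rfl
      have hφ3 : tsupport (fun x => (g x : ℂ)) ⊆ Iio 0 :=
        (closure_minimal (fun x hx => subset_closure (by
          simp only [Function.mem_support, ne_eq, Complex.ofReal_eq_zero] at hx ⊢
          exact hx)) (isClosed_closure)).trans hg3
      have := hvan _ hφ1 hφ2 hφ3
      rw [← U_pairing U hU hf (test_int hφ1 hφ2) (test_mem2 hφ1 hφ2)
        (fourier_mem2 U hU (test_int hφ1 hφ2) (test_mem2 hφ1 hφ2))] at this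
      rw [← this]
      refine integral_congr_ae (Filter.Eventually.of_forall fun x => ?_)
      simp [Complex.real_smul, mul_comm]

lemma tsupport_const_mul (c : ℂ) (f : ℝ → ℂ) :
    tsupport (fun x => c * f x) ⊆ tsupport f := by
  refine closure_minimal ?_ (isClosed_tsupport f)
  intro x hx
  refine subset_closure ?_
  simp only [Function.mem_support] at hx ⊢
  intro h0; exact hx (by rw [h0, mul_zero])

/-- For every polynomial `A` and test function `φ`, there is a test function `ψ` supported in
`tsupport φ` with `𝓕 ψ = A(x) * 𝓕 φ`. -/
lemma exists_test_poly_mul (A : Polynomial ℂ) {φ : ℝ → ℂ}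
    (hφ1 : ContDiff ℝ ∞ φ) (hφ2 : HasCompactSupport φ) :
    ∃ ψ : ℝ → ℂ, ContDiff ℝ ∞ ψ ∧ HasCompactSupport ψ ∧ tsupport ψ ⊆ tsupport φ ∧
      ∀ x : ℝ, 𝓕 ψ x = A.eval (x : ℂ) * 𝓕 φ x := by
  induction A using Polynomial.induction_on with
  | C a =>
    refine ⟨fun x => a * φ x, hφ1.const_smul a, ?_, ?_, fun x => by
      rw [myFourier_smul, Polynomial.eval_C]⟩
    · exact hφ2.mul_left
    · exact tsupport_const_mul _ _
  | add p q hp hq =>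
    obtain ⟨ψ1, h11, h12, h13, h14⟩ := hp
    obtain ⟨ψ2, h21, h22, h23, h24⟩ := hq
    refine ⟨fun x => ψ1 x + ψ2 x, h11.add h21, ?_, ?_, fun x => ?_⟩
    · exact h12.add h22
    · refine (tsupport_add (f := ψ1) (g := ψ2)).trans (union_subset h13 h23)
    · rw [myFourier_add (test_int h11 h12) (test_int h21 h22), h14, h24,
        Polynomial.eval_add, add_mul]
  | monomial n a ih =>
    obtain ⟨ψ, h1, h2, h3, h4⟩ := ih
    have hdiff : Differentiable ℝ ψ := h1.differentiable (by norm_num)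
    have hder1 : ContDiff ℝ ∞ (deriv ψ) := (contDiff_infty_iff_deriv.mp h1).2
    have hder2 : HasCompactSupport (deriv ψ) := h2.deriv
    have hder3 : tsupport (deriv ψ) ⊆ tsupport ψ :=
      closure_minimal support_deriv_subset (isClosed_tsupport ψ)
    refine ⟨fun x => (2 * Real.pi * I)⁻¹ * deriv ψ x, contDiff_const.mul hder1, hder2.mul_left,
      ?_, fun x => ?_⟩
    · exact (tsupport_const_mul _ _).trans (hder3.trans h3)
    · have hI : (2 * (Real.pi : ℂ) * I) ≠ 0 := by
        simp [Real.pi_ne_zero, Complex.I_ne_zero, Complex.ofReal_ne_zero]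
      rw [myFourier_smul, Real.fourier_deriv (test_int h1 h2) hdiff
        (test_int hder1 hder2)]
      simp only [smul_eq_mul, h4, Polynomial.eval_mul, Polynomial.eval_C,
        Polynomial.eval_pow, Polynomial.eval_X]
      field_simp
      ring

lemma ae_ne_zero_poly {Q : Polynomial ℂ} (hQ : Q ≠ 0) :
    ∀ᵐ x : ℝ, Q.eval (x : ℂ) ≠ 0 := by
  have hfin : {x : ℝ | Q.eval (x : ℂ) = 0}.Finite := by
    have : {x : ℝ | Q.eval (x : ℂ) = 0} ⊆
        (fun x : ℝ => (x : ℂ)) ⁻¹' {z : ℂ | Q.IsRoot z} := fun x hx => hx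
    refine Set.Finite.subset ?_ this
    exact (Polynomial.finite_setOf_isRoot hQ).preimage (Complex.ofReal_injective.injOn)
  have hzero : volume {x : ℝ | Q.eval (x : ℂ) = 0} = 0 := hfin.measure_zero _
  rw [MeasureTheory.ae_iff]
  simpa using hzero

lemma exists_lower_bound {P Q : Polynomial ℂ} (hQ : Q ≠ 0)
    (hco : ∀ z : ℂ, ¬ (P.eval z = 0 ∧ Q.eval z = 0)) :
    ∃ δ : ℝ, 0 < δ ∧ ∀ x : ℝ, δ ≤ ‖P.eval (x : ℂ)‖ + ‖Q.eval (x : ℂ)‖ := by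
  by_cases hdeg : 0 < Q.degree
  · have hcont : Continuous fun x : ℝ => ‖P.eval (x : ℂ)‖ + ‖Q.eval (x : ℂ)‖ := by
      fun_prop
    have htend : Filter.Tendsto (fun x : ℝ => ‖P.eval (x : ℂ)‖ + ‖Q.eval (x : ℂ)‖)
        (Filter.cocompact ℝ) Filter.atTop := by
      refine Filter.tendsto_atTop_mono (fun x => le_add_of_nonneg_left (norm_nonneg _)) ?_
      refine Q.tendsto_norm_atTop hdeg ?_
      have : Filter.Tendsto (fun x : ℝ => ‖x‖) (Filter.cocompact ℝ) Filter.atTop :=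
        tendsto_norm_cocompact_atTop
      simpa [Complex.norm_real] using this
    obtain ⟨x0, hx0⟩ := hcont.exists_forall_le htend
    refine ⟨_, ?_, hx0⟩
    have h1 : P.eval (x0 : ℂ) ≠ 0 ∨ Q.eval (x0 : ℂ) ≠ 0 := by
      by_contra hcon
      push_neg at hcon
      exact hco _ ⟨hcon.1, hcon.2⟩
    rcases h1 with h1 | h1
    · calc (0:ℝ) < ‖P.eval (x0 : ℂ)‖ := norm_pos_iff.mpr h1
        _ ≤ _ := le_add_of_nonneg_right (norm_nonneg _)
    · calc (0:ℝ) < ‖Q.eval (x0 : ℂ)‖ := norm_pos_iff.mpr h1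
        _ ≤ _ := le_add_of_nonneg_left (norm_nonneg _)
  · push_neg at hdeg
    have hc := Polynomial.eq_C_of_degree_le_zero hdeg
    refine ⟨‖Q.coeff 0‖, ?_, fun x => ?_⟩
    · refine norm_pos_iff.mpr fun h0 => hQ ?_
      rw [hc, h0, map_zero]
    · calc ‖Q.coeff 0‖ = ‖Q.eval (x : ℂ)‖ := by rw [hc]; simp
        _ ≤ _ := le_add_of_nonneg_left (norm_nonneg _)


/-- If P, Q have no common zeros, h ∈ H₊ and (P/Q)h ∈ H₊, then h/Q ∈ H₊. -/
theorem hardy_div_mem_hardy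
    (U : L2R ≃ₗᵢ[ℂ] L2R) (hU : IsFourierL2 U)
    (P Q : Polynomial ℂ) (hP : P ≠ 0) (hQ : Q ≠ 0)
    (hco : ∀ z : ℂ, ¬ (P.eval z = 0 ∧ Q.eval z = 0))
    (h : ℝ → ℂ) (hh : MeasureTheory.MemLp h 2 volume)
    (hH : InHardy U (hh.toLp h))
    (hg : MeasureTheory.MemLp (fun x : ℝ => P.eval (x : ℂ) / Q.eval (x : ℂ) * h x) 2 volume)
    (hgH : InHardy U (hg.toLp _)) :
    ∃ hq : MeasureTheory.MemLp (fun x : ℝ => h x / Q.eval (x : ℂ)) 2 volume,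
      InHardy U (hq.toLp _) := by
  have hPQ : IsCoprime P Q := by
    rw [Polynomial.isCoprime_iff_aeval_ne_zero_of_isAlgClosed (k := ℂ) ℂ P Q]
    intro a
    by_contra hcon
    push_neg at hcon
    refine hco a ⟨?_, ?_⟩
    · simpa using hcon.1
    · simpa using hcon.2
  obtain ⟨A, B, hAB⟩ := hPQ
  obtain ⟨δ, hδ, hbound⟩ := exists_lower_bound hQ hco
  have hQcont : Continuous fun x : ℝ => Q.eval (x : ℂ) :=
    Q.continuous.comp Complex.continuous_ofReal
  have hk : MemLp (fun x : ℝ => h x / Q.eval (x : ℂ)) 2 volume := by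
    have hmeas : AEStronglyMeasurable (fun x : ℝ => h x / Q.eval (x : ℂ)) volume := by
      simp only [div_eq_mul_inv]
      exact hh.1.mul (hQcont.measurable.inv.aestronglyMeasurable)
    refine MemLp.of_le_mul ((hg.norm.add hh.norm)) hmeas (c := δ⁻¹)
      (Filter.Eventually.of_forall fun x => ?_)
    simp only [Pi.add_apply]
    rw [Real.norm_of_nonneg (by positivity), inv_mul_eq_div, le_div_iff₀ hδ]
    by_cases hx : Q.eval (x : ℂ) = 0
    · simp only [hx, div_zero, norm_zero, zero_mul]
      positivity
    · have hq' : (0:ℝ) < ‖Q.eval (x : ℂ)‖ := norm_pos_iff.mpr hx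
      have h1 : ‖P.eval (x : ℂ) / Q.eval (x : ℂ) * h x‖
          = ‖P.eval (x : ℂ)‖ * ‖h x / Q.eval (x : ℂ)‖ := by
        rw [norm_mul, norm_div, norm_div]
        ring
      have h2 : ‖Q.eval (x : ℂ)‖ * ‖h x / Q.eval (x : ℂ)‖ = ‖h x‖ := by
        rw [norm_div, mul_comm, div_mul_cancel₀ _ (ne_of_gt hq')]
      calc ‖h x / Q.eval (x : ℂ)‖ * δ
          ≤ ‖h x / Q.eval (x : ℂ)‖ * (‖P.eval (x : ℂ)‖ + ‖Q.eval (x : ℂ)‖) :=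
            mul_le_mul_of_nonneg_left (hbound x) (norm_nonneg _)
        _ = ‖P.eval (x : ℂ)‖ * ‖h x / Q.eval (x : ℂ)‖
            + ‖Q.eval (x : ℂ)‖ * ‖h x / Q.eval (x : ℂ)‖ := by ring
        _ = ‖P.eval (x : ℂ) / Q.eval (x : ℂ) * h x‖ + ‖h x‖ := by rw [h1, h2]
  refine ⟨hk, ?_⟩
  rw [hardy_iff U hU hk]
  intro φ hφ1 hφ2 hφ3
  obtain ⟨ψA, hA1, hA2, hA3, hA4⟩ := exists_test_poly_mul A hφ1 hφ2
  obtain ⟨ψB, hB1, hB2, hB3, hB4⟩ := exists_test_poly_mul B hφ1 hφ2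
  have hgz : ∫ x : ℝ, (P.eval (x : ℂ) / Q.eval (x : ℂ) * h x) * 𝓕 ψA x = 0 :=
    (hardy_iff U hU hg).mp hgH ψA hA1 hA2 (hA3.trans hφ3)
  have hhz : ∫ x, h x * 𝓕 ψB x = 0 :=
    (hardy_iff U hU hh).mp hH ψB hB1 hB2 (hB3.trans hφ3)
  have hae : ∀ᵐ x : ℝ, h x / Q.eval (x : ℂ) * 𝓕 φ x =
      (P.eval (x : ℂ) / Q.eval (x : ℂ) * h x) * 𝓕 ψA x + h x * 𝓕 ψB x := by
    filter_upwards [ae_ne_zero_poly hQ] with x hx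
    have heval : A.eval (x : ℂ) * P.eval (x : ℂ) + B.eval (x : ℂ) * Q.eval (x : ℂ) = 1 := by
      have := congrArg (Polynomial.eval (x : ℂ)) hAB
      simpa using this
    simp only [hA4, hB4]
    have e1 : P.eval (x : ℂ) / Q.eval (x : ℂ) * h x * (A.eval (x : ℂ) * 𝓕 φ x)
        = A.eval (x : ℂ) * P.eval (x : ℂ) * (h x / Q.eval (x : ℂ) * 𝓕 φ x) := by ring
    have e2 : h x * (B.eval (x : ℂ) * 𝓕 φ x)
        = B.eval (x : ℂ) * Q.eval (x : ℂ) * (h x / Q.eval (x : ℂ) * 𝓕 φ x) := by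
      field_simp
    rw [e1, e2]
    calc h x / Q.eval (x : ℂ) * 𝓕 φ x
        = (A.eval (x : ℂ) * P.eval (x : ℂ) + B.eval (x : ℂ) * Q.eval (x : ℂ))
          * (h x / Q.eval (x : ℂ) * 𝓕 φ x) := by rw [heval, one_mul]
      _ = A.eval (x : ℂ) * P.eval (x : ℂ) * (h x / Q.eval (x : ℂ) * 𝓕 φ x)
          + B.eval (x : ℂ) * Q.eval (x : ℂ) * (h x / Q.eval (x : ℂ) * 𝓕 φ x) := by ring
  rw [integral_congr_ae hae,
    integral_add (myMulInt hg (fourier_mem2 U hU (test_int hA1 hA2) (test_mem2 hA1 hA2)))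
      (myMulInt hh (fourier_mem2 U hU (test_int hB1 hB2) (test_mem2 hB1 hB2))),
    hgz, hhz, add_zero]

end
end

section
/- Let κ : ℝ → ℂ be measurable, let p ∈ (0,∞]. Then κ is proper if and only if there exists a real-valued measurable function j on ℝ with j/(1+x²) integrable such that κ·e^j ∈ L^p(ℝ). -/
open MeasureTheory Real
open scoped ENNReal

noncomputable section

/-- A measurable symbol κ is proper iff ln(1+|κ|)/(1+x²) is integrable on ℝ. -/
def ProperSymbol (κ : ℝ → ℂ) : Prop :=
  MeasureTheory.Integrable (fun x : ℝ => Real.log (1 + ‖κ x‖) / (1 + x ^ 2))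

lemma aux_log_le_rpow_div {t s : ℝ} (ht : 0 ≤ t) (hs : 0 < s) :
    Real.log t ≤ t ^ s / s := by
  rcases eq_or_lt_of_le ht with h | h
  · simp [← h, Real.zero_rpow hs.ne']
  · have h1 : Real.log t = Real.log (t ^ s) / s := by
      rw [Real.log_rpow h]; field_simp
    rw [h1]
    have h2 : Real.log (t ^ s) ≤ t ^ s := by
      have := Real.log_le_sub_one_of_pos (Real.rpow_pos_of_pos h s)
      linarith
    exact div_le_div_of_nonneg_right h2 hs.le

lemma aux_meas_base : Measurable fun x : ℝ => (1:ℝ) + x ^ 2 :=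
  measurable_const.add (measurable_id.pow_const 2)

lemma aux_int34 : Integrable (fun x : ℝ => (1 + x ^ 2) ^ (-(3/4) : ℝ)) := by
  have h := integrable_rpow_neg_one_add_norm_sq (E := ℝ) (μ := volume) (r := 3/2)
    (by simp [Module.finrank_self]; norm_num)
  have : (fun x : ℝ => ((1 : ℝ) + ‖x‖ ^ 2) ^ (-(3/2) / 2 : ℝ))
      = fun x : ℝ => (1 + x ^ 2) ^ (-(3/4) : ℝ) := by
    funext x
    rw [Real.norm_eq_abs, sq_abs]
    norm_num
  rwa [this] at h

lemma aux_intB : Integrable (fun x : ℝ => Real.log (1 + x ^ 2) / (1 + x ^ 2)) := by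
  refine (aux_int34.const_mul 4).mono' (aux_meas_base.log.div aux_meas_base).aestronglyMeasurable
    (Filter.Eventually.of_forall fun x => ?_)
  have h1 : (0:ℝ) < 1 + x ^ 2 := by positivity
  have hlog : 0 ≤ Real.log (1 + x ^ 2) := Real.log_nonneg (by nlinarith)
  rw [Real.norm_eq_abs, abs_of_nonneg (div_nonneg hlog h1.le)]
  have h2 : Real.log (1 + x ^ 2) ≤ 4 * (1 + x ^ 2) ^ ((1:ℝ)/4) := by
    have := aux_log_le_rpow_div (t := 1 + x ^ 2) (s := (1:ℝ)/4) h1.le (by norm_num)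
    calc Real.log (1 + x ^ 2) ≤ (1 + x ^ 2) ^ ((1:ℝ)/4) / ((1:ℝ)/4) := this
    _ = 4 * (1 + x ^ 2) ^ ((1:ℝ)/4) := by ring
  calc Real.log (1 + x ^ 2) / (1 + x ^ 2)
      ≤ 4 * (1 + x ^ 2) ^ ((1:ℝ)/4) / (1 + x ^ 2) := by
        exact div_le_div_of_nonneg_right h2 h1.le
    _ = 4 * (1 + x ^ 2) ^ (-(3/4) : ℝ) := by
        rw [mul_div_assoc]
        congr 1
        rw [show (-(3/4) : ℝ) = (1:ℝ)/4 - 1 by norm_num, Real.rpow_sub h1, Real.rpow_one]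

lemma aux_log_one_add_le {t pr : ℝ} (ht : 0 ≤ t) (hpr : 0 < pr) :
    Real.log (1 + t) ≤ Real.log 2 + t ^ pr / pr := by
  rcases le_or_gt t 1 with h | h
  · have h1 : Real.log (1 + t) ≤ Real.log 2 :=
      Real.log_le_log (by linarith) (by linarith)
    have h2 : 0 ≤ t ^ pr / pr := div_nonneg (Real.rpow_nonneg ht _) hpr.le
    linarith
  · have h1 : Real.log (1 + t) ≤ Real.log (2 * t) :=
      Real.log_le_log (by linarith) (by linarith)
    rw [Real.log_mul (by norm_num) (by linarith)] at h1
    have h2 : Real.log t ≤ t ^ pr / pr := aux_log_le_rpow_div ht hpr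
    linarith

lemma aux_intD {g : ℝ → ℂ} {p : ℝ≥0∞} (hp : p ≠ 0) (hgm : Measurable g)
    (hg : MemLp g p volume) :
    Integrable (fun x : ℝ => Real.log (1 + ‖g x‖) / (1 + x ^ 2)) := by
  have hm : AEStronglyMeasurable (fun x : ℝ => Real.log (1 + ‖g x‖) / (1 + x ^ 2)) volume :=
    ((measurable_const.add hgm.norm).log.div aux_meas_base).aestronglyMeasurable
  by_cases hptop : p = ∞
  · subst hptop
    set C := (eLpNormEssSup g volume).toReal with hCdef
    have htop : eLpNormEssSup g volume ≠ ⊤ := by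
      simpa [eLpNorm_exponent_top] using hg.2.ne
    have hC : ∀ᵐ x : ℝ ∂volume, ‖g x‖ ≤ C := by
      filter_upwards [ae_le_eLpNormEssSup (f := g) (μ := volume)] with x hx
      have := ENNReal.toReal_mono htop hx
      simpa using this
    refine (integrable_inv_one_add_sq.const_mul (Real.log (1 + C))).mono' hm ?_
    filter_upwards [hC] with x hx
    have h1 : (0:ℝ) < 1 + x ^ 2 := by positivity
    have hlog : 0 ≤ Real.log (1 + ‖g x‖) := Real.log_nonneg (by nlinarith [norm_nonneg (g x)])
    rw [Real.norm_eq_abs, abs_of_nonneg (div_nonneg hlog h1.le)]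
    have h2 : Real.log (1 + ‖g x‖) ≤ Real.log (1 + C) :=
      Real.log_le_log (by nlinarith [norm_nonneg (g x)]) (by linarith)
    rw [div_eq_mul_inv]
    exact mul_le_mul_of_nonneg_right h2 (by positivity)
  · have hpr : 0 < p.toReal := ENNReal.toReal_pos hp hptop
    have hint : Integrable (fun x : ℝ => ‖g x‖ ^ p.toReal) :=
      hg.integrable_norm_rpow hp hptop
    refine ((integrable_inv_one_add_sq.const_mul (Real.log 2)).add
      (hint.const_mul (1 / p.toReal))).mono' hm (Filter.Eventually.of_forall fun x => ?_)
    have h1 : (0:ℝ) < 1 + x ^ 2 := by positivity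
    have hlog : 0 ≤ Real.log (1 + ‖g x‖) := Real.log_nonneg (by nlinarith [norm_nonneg (g x)])
    rw [Real.norm_eq_abs, abs_of_nonneg (div_nonneg hlog h1.le)]
    have h2 : Real.log (1 + ‖g x‖) ≤ Real.log 2 + ‖g x‖ ^ p.toReal / p.toReal :=
      aux_log_one_add_le (norm_nonneg _) hpr
    have h3 : Real.log (1 + ‖g x‖) / (1 + x ^ 2)
        ≤ (Real.log 2 + ‖g x‖ ^ p.toReal / p.toReal) / (1 + x ^ 2) :=
      div_le_div_of_nonneg_right h2 h1.le
    refine h3.trans ?_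
    rw [add_div]
    refine add_le_add (le_of_eq (div_eq_mul_inv _ _)) ?_
    have h4 : ‖g x‖ ^ p.toReal / p.toReal / (1 + x ^ 2) ≤ ‖g x‖ ^ p.toReal / p.toReal :=
        div_le_self (div_nonneg (Real.rpow_nonneg (norm_nonneg _) _) hpr.le) (by nlinarith)
    calc ‖g x‖ ^ p.toReal / p.toReal / (1 + x ^ 2) ≤ ‖g x‖ ^ p.toReal / p.toReal := h4
      _ = 1 / p.toReal * ‖g x‖ ^ p.toReal := by ring

/-- For any p ∈ (0,∞], κ is proper iff κ·e^j ∈ L^p(ℝ) for some real-valued j with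
j/(1+x²) integrable. -/
theorem properSymbol_iff_exists_exp_weight
    (p : ℝ≥0∞) (hp : 0 < p) (κ : ℝ → ℂ) (hκ : Measurable κ) :
    ProperSymbol κ ↔
      ∃ j : ℝ → ℝ, Measurable j ∧
        MeasureTheory.Integrable (fun x : ℝ => j x / (1 + x ^ 2)) ∧
        MeasureTheory.MemLp (fun x : ℝ => κ x * Real.exp (j x)) p volume := by
  constructor
  · intro hprop
    set c : ℝ := 1 / p.toReal + 1 with hcdef
    have hc1 : 1 ≤ c := le_add_of_nonneg_left (by positivity)
    have hjmeas : Measurable fun x : ℝ => -Real.log (1 + ‖κ x‖) - c * Real.log (1 + x ^ 2) :=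
      ((measurable_const.add hκ.norm).log.neg).sub (aux_meas_base.log.const_mul c)
    refine ⟨fun x => -Real.log (1 + ‖κ x‖) - c * Real.log (1 + x ^ 2), hjmeas, ?_, ?_⟩
    · have heq : (fun x : ℝ =>
          (-Real.log (1 + ‖κ x‖) - c * Real.log (1 + x ^ 2)) / (1 + x ^ 2))
          = fun x : ℝ => -(Real.log (1 + ‖κ x‖) / (1 + x ^ 2))
              - c * (Real.log (1 + x ^ 2) / (1 + x ^ 2)) := by
        funext x; ring
      rw [heq]
      exact hprop.neg.sub (aux_intB.const_mul c)
    · have hmeas : AEStronglyMeasurable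
        (fun x : ℝ => κ x * (Real.exp (-Real.log (1 + ‖κ x‖) - c * Real.log (1 + x ^ 2)) : ℂ))
          volume := (hκ.mul (Complex.measurable_ofReal.comp hjmeas.exp)).aestronglyMeasurable
      have hb : ∀ x : ℝ,
          ‖κ x * (Real.exp (-Real.log (1 + ‖κ x‖) - c * Real.log (1 + x ^ 2)) : ℂ)‖
            ≤ (1 + x ^ 2) ^ (-c) := by
        intro x
        have h1 : (0:ℝ) < 1 + x ^ 2 := by positivity
        have h2 : (0:ℝ) < 1 + ‖κ x‖ := by nlinarith [norm_nonneg (κ x)]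
        rw [norm_mul, Complex.norm_real, Real.norm_eq_abs, Real.abs_exp, Real.exp_sub,
          Real.exp_neg, Real.exp_log h2]
        have h3 : Real.exp (c * Real.log (1 + x ^ 2)) = (1 + x ^ 2) ^ c := by
          rw [Real.rpow_def_of_pos h1, mul_comm]
        rw [h3]
        have h4 : ((1 + x ^ 2) ^ c)⁻¹ = (1 + x ^ 2) ^ (-c) := (Real.rpow_neg h1.le c).symm
        calc ‖κ x‖ * ((1 + ‖κ x‖)⁻¹ / (1 + x ^ 2) ^ c)
            ≤ 1 * ((1 + x ^ 2) ^ c)⁻¹ := by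
              rw [div_eq_mul_inv]
              have h5 : ‖κ x‖ * (1 + ‖κ x‖)⁻¹ ≤ 1 := by
                rw [← div_eq_mul_inv, div_le_one h2]; linarith
              calc ‖κ x‖ * ((1 + ‖κ x‖)⁻¹ * ((1 + x ^ 2) ^ c)⁻¹)
                  = ‖κ x‖ * (1 + ‖κ x‖)⁻¹ * ((1 + x ^ 2) ^ c)⁻¹ := by ring
                _ ≤ 1 * ((1 + x ^ 2) ^ c)⁻¹ := by
                    exact mul_le_mul_of_nonneg_right h5 (by positivity)
          _ = (1 + x ^ 2) ^ (-c) := by rw [one_mul, h4]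
      by_cases hptop : p = ∞
      · subst hptop
        refine memLp_top_of_bound hmeas 1 (Filter.Eventually.of_forall fun x => ?_)
        refine (hb x).trans ?_
        exact Real.rpow_le_one_of_one_le_of_nonpos (by nlinarith) (by linarith)
      · have hpr : 0 < p.toReal := ENNReal.toReal_pos hp.ne' hptop
        refine (memLp_norm_rpow_iff hmeas hp.ne' hptop).mp ?_
        rw [ENNReal.div_self hp.ne' hptop, memLp_one_iff_integrable]
        refine integrable_inv_one_add_sq.mono'
          (((Real.continuous_rpow_const hpr.le).measurable.comp
            (hκ.mul (Complex.measurable_ofReal.comp hjmeas.exp)).norm).aestronglyMeasurable)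
          (Filter.Eventually.of_forall fun x => ?_)
        have h1 : (0:ℝ) < 1 + x ^ 2 := by positivity
        rw [Real.norm_eq_abs, abs_of_nonneg (Real.rpow_nonneg (norm_nonneg _) _)]
        have h6 : ‖κ x * (Real.exp (-Real.log (1 + ‖κ x‖) - c * Real.log (1 + x ^ 2)) : ℂ)‖
            ^ p.toReal ≤ ((1 + x ^ 2) ^ (-c)) ^ p.toReal :=
          Real.rpow_le_rpow (norm_nonneg _) (hb x) hpr.le
        refine h6.trans ?_
        rw [← Real.rpow_mul h1.le]
        have h7 : (1 + x ^ 2) ^ (-c * p.toReal) ≤ (1 + x ^ 2) ^ (-1 : ℝ) := by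
          apply Real.rpow_le_rpow_of_exponent_le (by nlinarith)
          have h8 : c * p.toReal = 1 + p.toReal := by
            rw [hcdef]; field_simp
          nlinarith
        calc (1 + x ^ 2) ^ (-c * p.toReal) ≤ (1 + x ^ 2) ^ (-1 : ℝ) := h7
          _ = (1 + x ^ 2)⁻¹ := Real.rpow_neg_one _
  · rintro ⟨j, hjm, hji, hgp⟩
    set g : ℝ → ℂ := fun x => κ x * (Real.exp (j x) : ℂ) with hgdef
    have hgmeas : Measurable g := hκ.mul (Complex.measurable_ofReal.comp hjm.exp)
    have h1 : Integrable (fun x : ℝ => Real.log (1 + ‖g x‖) / (1 + x ^ 2)) :=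
      aux_intD hp.ne' hgmeas hgp
    have h2 : Integrable (fun x : ℝ => |j x| / (1 + x ^ 2)) := by
      refine hji.abs.congr (Filter.Eventually.of_forall fun x => ?_)
      have h1 : (0:ℝ) < 1 + x ^ 2 := by positivity
      show |j x / (1 + x ^ 2)| = |j x| / (1 + x ^ 2)
      rw [abs_div, abs_of_pos h1]
    have hm : AEStronglyMeasurable
        (fun x : ℝ => Real.log (1 + ‖κ x‖) / (1 + x ^ 2)) volume :=
      ((measurable_const.add hκ.norm).log.div aux_meas_base).aestronglyMeasurable
    refine (h1.add h2).mono' hm (Filter.Eventually.of_forall fun x => ?_)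
    have hx1 : (0:ℝ) < 1 + x ^ 2 := by positivity
    have hx2 : (0:ℝ) < 1 + ‖κ x‖ := by nlinarith [norm_nonneg (κ x)]
    have hlog : 0 ≤ Real.log (1 + ‖κ x‖) := Real.log_nonneg (by linarith [norm_nonneg (κ x)])
    rw [Real.norm_eq_abs, abs_of_nonneg (div_nonneg hlog hx1.le)]
    have hgx : ‖g x‖ = ‖κ x‖ * Real.exp (j x) := by
      rw [hgdef]; simp [norm_mul, Complex.norm_real, Real.abs_exp]
    have hkey : Real.log (1 + ‖κ x‖) ≤ Real.log (1 + ‖g x‖) + |j x| := by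
      have he1 : Real.exp (-j x) ≤ Real.exp |j x| := Real.exp_le_exp.mpr (neg_le_abs _)
      have he2 : (1:ℝ) ≤ Real.exp |j x| := Real.one_le_exp (abs_nonneg _)
      have hκx : ‖κ x‖ = ‖g x‖ * Real.exp (-j x) := by
        rw [hgx, Real.exp_neg]
        field_simp
      have hstep : 1 + ‖κ x‖ ≤ (1 + ‖g x‖) * Real.exp |j x| := by
        rw [hκx]
        have hgnn : 0 ≤ ‖g x‖ := norm_nonneg _
        nlinarith [mul_le_mul_of_nonneg_left he1 hgnn]
      calc Real.log (1 + ‖κ x‖) ≤ Real.log ((1 + ‖g x‖) * Real.exp |j x|) :=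
            Real.log_le_log hx2 hstep
        _ = Real.log (1 + ‖g x‖) + |j x| := by
            rw [Real.log_mul (by nlinarith [norm_nonneg (g x)]) (Real.exp_ne_zero _),
              Real.log_exp]
    calc Real.log (1 + ‖κ x‖) / (1 + x ^ 2)
        ≤ (Real.log (1 + ‖g x‖) + |j x|) / (1 + x ^ 2) :=
          div_le_div_of_nonneg_right hkey hx1.le
      _ = Real.log (1 + ‖g x‖) / (1 + x ^ 2) + |j x| / (1 + x ^ 2) := add_div _ _ _
end
end

section
/- Let κ : ℝ → ℂ be measurable with W_κ densely defined. Then W_κ is symmetric (W_κ ⊆ W_κ*) if and only if κ is real-valued a.e. -/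
open MeasureTheory Complex Real Set FourierTransform
open scoped ENNReal ComplexConjugate

noncomputable section

/-- The domain of the Wiener–Hopf operator W_κ, in the model of L²(ℝ₊) as the
subspace of L²(ℝ) of functions vanishing a.e. on (-∞,0]. -/
def WHDom (U : L2R ≃ₗᵢ[ℂ] L2R) (κ : ℝ → ℂ) : Set L2R :=
  {g : L2R | (∀ᵐ x : ℝ, x ≤ 0 → g x = 0) ∧
    MeasureTheory.MemLp (fun x : ℝ => κ x * (U.symm g) x) 2 volume}



open Filter Topology
open scoped InnerProductSpace

lemma norm_cexp_neg_mul (c : ℂ) (t : ℝ) : ‖Complex.exp (-(c * t))‖ = Real.exp (-(c.re * t)) := by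
  rw [Complex.norm_exp]
  congr 1
  simp [Complex.mul_re]

lemma tendsto_mul_exp_neg {r : ℝ} (hr : 0 < r) :
    Tendsto (fun t : ℝ => t * Real.exp (-(r * t))) atTop (𝓝 0) := by
  have h := (Real.tendsto_pow_mul_exp_neg_atTop_nhds_zero 1).comp
    (tendsto_id.const_mul_atTop hr)
  have h2 := h.const_mul (1 / r)
  rw [mul_zero] at h2
  refine h2.congr fun t => ?_
  simp only [Function.comp_apply, pow_one, id_eq]
  field_simp

lemma integrableOn_mul_exp {c : ℂ} (hc : 0 < c.re) :
    IntegrableOn (fun t : ℝ => (t : ℂ) * Complex.exp (-(c * t))) (Ioi (0:ℝ)) := by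
  have hcont : Continuous fun t : ℝ => (t : ℂ) * Complex.exp (-(c * t)) := by
    continuity
  refine Integrable.mono' (g := fun t => (2 / c.re) * Real.exp (-(c.re / 2) * t))
    ((exp_neg_integrableOn_Ioi 0 (by positivity)).const_mul _)
    hcont.aestronglyMeasurable.restrict ?_
  filter_upwards [self_mem_ae_restrict measurableSet_Ioi] with t ht
  have ht0 : (0:ℝ) ≤ t := le_of_lt ht
  rw [norm_mul, norm_cexp_neg_mul, Complex.norm_real, Real.norm_eq_abs, _root_.abs_of_nonneg ht0]
  have key : t ≤ (2 / c.re) * Real.exp (c.re / 2 * t) := by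
    have h1 : c.re / 2 * t ≤ Real.exp (c.re / 2 * t) :=
      le_trans (by linarith) (Real.add_one_le_exp _)
    calc t = (2 / c.re) * (c.re / 2 * t) := by field_simp
    _ ≤ (2 / c.re) * Real.exp (c.re / 2 * t) := by
        apply mul_le_mul_of_nonneg_left h1 (by positivity)
  calc t * Real.exp (-(c.re * t)) ≤ (2 / c.re) * Real.exp (c.re / 2 * t) * Real.exp (-(c.re * t)) :=
        mul_le_mul_of_nonneg_right key (Real.exp_pos _).le
  _ = 2 / c.re * Real.exp (-(c.re / 2) * t) := by
      rw [mul_assoc, ← Real.exp_add]; ring_nf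

lemma integral_mul_exp {c : ℂ} (hc : 0 < c.re) :
    ∫ t in Ioi (0:ℝ), (t : ℂ) * Complex.exp (-(c * t)) = (c ^ 2)⁻¹ := by
  have hc0 : c ≠ 0 := fun h => by simp [h] at hc
  have key := integral_Ioi_of_hasDerivAt_of_tendsto'
    (f := fun t : ℝ => -((t : ℂ) * c⁻¹ + (c ^ 2)⁻¹) * Complex.exp (-(c * t)))
    (f' := fun t : ℝ => (t : ℂ) * Complex.exp (-(c * t))) (a := 0) (m := 0)
    ?_ (integrableOn_mul_exp hc) ?_
  · rw [key]; simp
  · intro t _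
    have h1 : HasDerivAt (fun t : ℝ => (t : ℂ)) 1 t := by
      simpa using (hasDerivAt_id t).ofReal_comp
    have h2 : HasDerivAt (fun t : ℝ => -(c * (t : ℂ))) (-c) t := by
      have := (h1.const_mul c).neg; simp only [mul_one] at this; exact this
    have h3 := h2.cexp
    have h4 : HasDerivAt (fun t : ℝ => -((t : ℂ) * c⁻¹ + (c ^ 2)⁻¹)) (-c⁻¹) t := by
      have := ((h1.mul_const c⁻¹).add_const ((c ^ 2)⁻¹)).neg; simp only [one_mul] at this; exact this
    have h5 := h4.mul h3
    refine h5.congr_deriv ?_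
    field_simp
    ring
  · refine squeeze_zero_norm' (a := fun t : ℝ =>
      ‖c⁻¹‖ * (t * Real.exp (-(c.re * t))) + ‖(c ^ 2)⁻¹‖ * Real.exp (-(c.re * t))) ?_ ?_
    · filter_upwards [eventually_ge_atTop (0:ℝ)] with t ht
      rw [norm_mul, norm_neg, norm_cexp_neg_mul]
      have : ‖(t : ℂ) * c⁻¹ + (c ^ 2)⁻¹‖ ≤ t * ‖c⁻¹‖ + ‖(c ^ 2)⁻¹‖ := by
        refine le_trans (norm_add_le _ _) ?_
        rw [norm_mul, Complex.norm_real, Real.norm_eq_abs, _root_.abs_of_nonneg ht]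
      calc ‖(t : ℂ) * c⁻¹ + (c ^ 2)⁻¹‖ * Real.exp (-(c.re * t))
          ≤ (t * ‖c⁻¹‖ + ‖(c ^ 2)⁻¹‖) * Real.exp (-(c.re * t)) :=
            mul_le_mul_of_nonneg_right this (Real.exp_pos _).le
      _ = ‖c⁻¹‖ * (t * Real.exp (-(c.re * t))) + ‖(c ^ 2)⁻¹‖ * Real.exp (-(c.re * t)) := by ring
    · have l1 := (tendsto_mul_exp_neg hc).const_mul ‖c⁻¹‖
      have l2 : Tendsto (fun t : ℝ => Real.exp (-(c.re * t))) atTop (𝓝 0) := by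
        have := (Real.tendsto_pow_mul_exp_neg_atTop_nhds_zero 0).comp
          (tendsto_id.const_mul_atTop hc)
        refine this.congr fun t => ?_
        simp
      have l3 := l2.const_mul ‖(c ^ 2)⁻¹‖
      rw [mul_zero] at l1 l3
      simpa using l1.add l3


def hfun : ℝ → ℂ := fun ξ => if 0 ≤ ξ then (ξ : ℂ) * Complex.exp (-(ξ : ℂ)) else 0

def f₀ : ℝ → ℂ := fun x => (((1 : ℂ) - (2 * π * x : ℝ) * Complex.I) ^ 2)⁻¹

lemma hfun_zero {ξ : ℝ} (hξ : ξ ≤ 0) : hfun ξ = 0 := by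
  unfold hfun
  split_ifs with h
  · have : ξ = 0 := le_antisymm hξ h
    simp [this]
  · rfl

lemma hfun_cont : Continuous hfun := by
  apply Continuous.if_le (by continuity) continuous_const continuous_const continuous_id
  intro x hx
  simp [← hx.symm]

lemma hfun_eq_indicator : hfun = (Ici (0:ℝ)).indicator (fun ξ : ℝ => (ξ : ℂ) * Complex.exp (-(ξ : ℂ))) := by
  funext ξ
  simp [hfun, indicator_apply, mem_Ici]

lemma hfun_int : Integrable hfun volume := by
  rw [hfun_eq_indicator]
  rw [integrable_indicator_iff measurableSet_Ici, integrableOn_Ici_iff_integrableOn_Ioi]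
  have := integrableOn_mul_exp (c := 1) (by norm_num)
  exact this.congr_fun (fun ξ _ => by norm_num) measurableSet_Ioi

lemma hfun_norm (ξ : ℝ) (h : 0 ≤ ξ) : ‖hfun ξ‖ = ξ * Real.exp (-ξ) := by
  rw [hfun, if_pos h, norm_mul, Complex.norm_real, Real.norm_eq_abs, _root_.abs_of_nonneg h,
    Complex.norm_exp]
  norm_num

lemma hfun_norm_le_one (ξ : ℝ) : ‖hfun ξ‖ ≤ 1 := by
  rcases le_or_gt 0 ξ with h | h
  · rw [hfun_norm ξ h]
    have : ξ ≤ Real.exp ξ := le_trans (by linarith) (Real.add_one_le_exp ξ)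
    calc ξ * Real.exp (-ξ) ≤ Real.exp ξ * Real.exp (-ξ) :=
      mul_le_mul_of_nonneg_right this (Real.exp_pos _).le
    _ = 1 := by rw [← Real.exp_add]; simp
  · rw [hfun, if_neg (not_le.2 h)]; simp

lemma hfun_mem2 : MeasureTheory.MemLp hfun 2 volume := by
  rw [memLp_two_iff_integrable_sq_norm hfun_cont.aestronglyMeasurable]
  refine Integrable.mono' hfun_int.norm ((hfun_cont.norm.pow 2).aestronglyMeasurable) ?_
  filter_upwards with ξ
  rw [Real.norm_eq_abs, _root_.abs_of_nonneg (by positivity)]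
  calc ‖hfun ξ‖ ^ 2 = ‖hfun ξ‖ * ‖hfun ξ‖ := sq ‖hfun ξ‖
  _ ≤ 1 * ‖hfun ξ‖ := mul_le_mul_of_nonneg_right (hfun_norm_le_one ξ) (norm_nonneg _)
  _ = ‖hfun ξ‖ := one_mul _

lemma c_ne (x : ℝ) : (1 : ℂ) - (2 * π * x : ℝ) * Complex.I ≠ 0 := by
  intro h
  have := congrArg Complex.re h
  simp at this

lemma f₀_ne (x : ℝ) : f₀ x ≠ 0 := inv_ne_zero (pow_ne_zero _ (c_ne x))

lemma f₀_cont : Continuous f₀ := by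
  apply Continuous.inv₀
  · continuity
  · exact fun x => pow_ne_zero _ (c_ne x)

lemma f₀_norm (x : ℝ) : ‖f₀ x‖ = (1 + (2 * π * x) ^ 2)⁻¹ := by
  rw [f₀, norm_inv, norm_pow]
  congr 1
  rw [Complex.sq_norm]
  simp [Complex.normSq_apply]
  ring

lemma f₀_int : Integrable f₀ volume := by
  refine Integrable.mono' integrable_inv_one_add_sq f₀_cont.aestronglyMeasurable ?_
  filter_upwards with x
  rw [f₀_norm]
  apply inv_anti₀ (by positivity)
  have h1 : x ^ 2 ≤ (2 * π * x) ^ 2 := by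
    rw [mul_pow]
    have hπ : (1:ℝ) ≤ (2*π)^2 := by nlinarith [Real.pi_gt_three]
    nlinarith [mul_nonneg (sub_nonneg.2 hπ) (sq_nonneg x)]
  linarith

lemma f₀_norm_le_one (x : ℝ) : ‖f₀ x‖ ≤ 1 := by
  rw [f₀_norm]
  have h0 : (1:ℝ) ≤ 1 + (2 * π * x) ^ 2 := by nlinarith [sq_nonneg (2*π*x)]
  calc (1 + (2 * π * x) ^ 2)⁻¹ ≤ 1⁻¹ := by apply inv_anti₀ one_pos h0
  _ = 1 := inv_one

lemma f₀_mem2 : MeasureTheory.MemLp f₀ 2 volume := by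
  rw [memLp_two_iff_integrable_sq_norm f₀_cont.aestronglyMeasurable]
  refine Integrable.mono' f₀_int.norm ((f₀_cont.norm.pow 2).aestronglyMeasurable) ?_
  filter_upwards with x
  rw [Real.norm_eq_abs, _root_.abs_of_nonneg (by positivity)]
  calc ‖f₀ x‖ ^ 2 = ‖f₀ x‖ * ‖f₀ x‖ := sq ‖f₀ x‖
  _ ≤ 1 * ‖f₀ x‖ := mul_le_mul_of_nonneg_right (f₀_norm_le_one x) (norm_nonneg _)
  _ = ‖f₀ x‖ := one_mul _

lemma fourierInv_hfun (x : ℝ) : 𝓕⁻ hfun x = f₀ x := by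
  rw [Real.fourierInv_eq_fourier_neg,
    Real.fourier_real_eq_integral_exp_smul]
  have step1 : ∀ v : ℝ, Complex.exp (↑(-2 * π * v * -x) * Complex.I) • hfun v =
      (Ioi (0:ℝ)).indicator (fun v : ℝ => (v : ℂ) *
        Complex.exp (-((1 - (2 * π * x : ℝ) * Complex.I) * v))) v := by
    intro v
    rcases lt_trichotomy v 0 with h | h | h
    · rw [hfun_zero h.le, smul_zero, indicator_of_notMem (by simpa using not_lt.2 h.le)]
    · subst h
      rw [hfun_zero le_rfl, smul_zero, indicator_of_notMem (by simp)]
    · rw [indicator_of_mem (mem_Ioi.2 h), hfun, if_pos h.le, smul_eq_mul]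
      rw [← mul_assoc, mul_comm (Complex.exp _) (v:ℂ), mul_assoc, ← Complex.exp_add]
      congr 2
      push_cast
      ring
  rw [MeasureTheory.integral_congr_ae (Filter.Eventually.of_forall step1),
    MeasureTheory.integral_indicator measurableSet_Ioi]
  rw [integral_mul_exp (by simp)]
  rfl

lemma fourier_f₀ : 𝓕 f₀ = hfun := by
  have h1 : f₀ = 𝓕⁻ hfun := funext fun x => (fourierInv_hfun x).symm
  have h2 : Integrable (𝓕 hfun) volume := by
    have h3 : 𝓕 hfun = fun w => f₀ (-w) := by
      funext w
      have h4 := Real.fourierInv_eq_fourier_neg hfun (-w)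
      rw [neg_neg] at h4
      rw [← h4, fourierInv_hfun]
    rw [h3]
    exact f₀_int.comp_neg
  rw [h1]
  exact hfun_cont.fourier_fourierInv_eq hfun_int h2

/-- a.e. shift helper -/
lemma ae_shift (a : ℝ) {Q : ℝ → Prop} (h : ∀ᵐ x : ℝ, Q x) : ∀ᵐ x : ℝ, Q (x - a) :=
  (measurePreserving_sub_right (volume : Measure ℝ) a).quasiMeasurePreserving.ae h

def eMod (a x : ℝ) : ℂ := Complex.exp ((2 * π * a * x : ℝ) * Complex.I)

lemma norm_eMod (a x : ℝ) : ‖eMod a x‖ = 1 := by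
  rw [eMod, Complex.norm_exp]
  simp

lemma eMod_cont (a : ℝ) : Continuous (eMod a) := by unfold eMod; continuity

lemma memℒp_eMod_mul {a : ℝ} {F : ℝ → ℂ} (hF : MeasureTheory.MemLp F 2 volume) :
    MeasureTheory.MemLp (fun x => eMod a x * F x) 2 volume := by
  refine hF.of_le ((eMod_cont a).aestronglyMeasurable.mul hF.aestronglyMeasurable) ?_
  filter_upwards with x
  rw [norm_mul, norm_eMod, one_mul]

def WHMod (a : ℝ) (F : L2R) : L2R :=
  (memℒp_eMod_mul (a := a) (Lp.memLp F)).toLp (fun x => eMod a x * F x)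

lemma coe_Mod (a : ℝ) (F : L2R) : WHMod a F =ᵐ[volume] fun x => eMod a x * F x :=
  MemLp.coeFn_toLp _

lemma dist_Mod (a : ℝ) (F G : L2R) : dist (WHMod a F) (WHMod a G) = dist F G := by
  rw [Lp.dist_def, Lp.dist_def]
  congr 1
  have h1 : (⇑(WHMod a F) - ⇑(WHMod a G)) =ᵐ[volume] fun x => eMod a x * (F x - G x) := by
    filter_upwards [coe_Mod a F, coe_Mod a G] with x h1 h2
    simp only [Pi.sub_apply, h1, h2]
    ring
  rw [eLpNorm_congr_ae h1]
  apply eLpNorm_congr_norm_ae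
  filter_upwards with x
  rw [norm_mul, norm_eMod, one_mul]
  rfl

def WHTrans (a : ℝ) : L2R →+ L2R :=
  Lp.compMeasurePreserving (· - a) (measurePreserving_sub_right volume a)

lemma coe_Trans (a : ℝ) (g : L2R) : WHTrans a g =ᵐ[volume] fun x => g (x - a) :=
  Lp.coeFn_compMeasurePreserving g _

lemma dist_Trans (a : ℝ) (F G : L2R) : dist (WHTrans a F) (WHTrans a G) = dist F G :=
  (Lp.isometry_compMeasurePreserving (p := 2) (E := ℂ)
    (measurePreserving_sub_right volume a)).dist_eq F G

/-- Fourier shift for nice functions -/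
lemma fourier_eMod_mul {φ : ℝ → ℂ} (a : ℝ) (w : ℝ) :
    𝓕 (fun x => eMod a x * φ x) w = 𝓕 φ (w - a) := by
  rw [Real.fourier_real_eq_integral_exp_smul,
    Real.fourier_real_eq_integral_exp_smul]
  apply MeasureTheory.integral_congr_ae
  filter_upwards with v
  rw [smul_eq_mul, smul_eq_mul, eMod, ← mul_assoc, ← Complex.exp_add]
  congr 2
  push_cast
  ring

variable (U : L2R ≃ₗᵢ[ℂ] L2R)

lemma key2 (hU : IsFourierL2 U) (a : ℝ) (F : L2R) : U (WHMod a F) = WHTrans a (U F) := by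
  -- first for continuous compactly supported
  have nice : ∀ (φ : ℝ → ℂ) (hc : Continuous φ) (hs : HasCompactSupport φ)
      (hφ2 : MeasureTheory.MemLp φ 2 volume),
      U (WHMod a (hφ2.toLp φ)) = WHTrans a (U (hφ2.toLp φ)) := by
    intro φ hc hs hφ2
    set ψ : ℝ → ℂ := fun x => eMod a x * φ x with hψdef
    have hψc : Continuous ψ := (eMod_cont a).mul hc
    have hψs : HasCompactSupport ψ := hs.mul_left
    have hψ2 : MeasureTheory.MemLp ψ 2 volume := hψc.memLp_of_hasCompactSupport hψs
    have e1 : WHMod a (hφ2.toLp φ) = hψ2.toLp ψ := by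
      apply MemLp.toLp_congr (memℒp_eMod_mul (a := a) (Lp.memLp (hφ2.toLp φ))) hψ2
      filter_upwards [hφ2.coeFn_toLp] with x hx
      rw [hx]
    have e2 : U (hψ2.toLp ψ) =ᵐ[volume] 𝓕 ψ :=
      hU ψ (hψc.integrable_of_hasCompactSupport hψs) hψ2
    have e3 : U (hφ2.toLp φ) =ᵐ[volume] 𝓕 φ :=
      hU φ (hc.integrable_of_hasCompactSupport hs) hφ2
    have e4 : WHTrans a (U (hφ2.toLp φ)) =ᵐ[volume] fun x => 𝓕 φ (x - a) := by
      have h5 : ∀ᵐ x : ℝ, (U (hφ2.toLp φ) : ℝ → ℂ) (x - a) = 𝓕 φ (x - a) := ae_shift a e3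
      filter_upwards [coe_Trans a (U (hφ2.toLp φ)), h5] with x h1 h2
      rw [h1, h2]
    apply Lp.ext
    rw [e1]
    filter_upwards [e2, e4] with x h1 h2
    rw [h1, h2, fourier_eMod_mul]
  -- general case by approximation
  by_contra hne
  set d := dist (U (WHMod a F)) (WHTrans a (U F)) with hd
  have hdpos : 0 < d := dist_pos.2 hne
  obtain ⟨φ, hs, hsub, hc, hφ2⟩ := (Lp.memLp F).exists_hasCompactSupport_eLpNorm_sub_le
    (p := 2) ENNReal.ofNat_ne_top (ε := ENNReal.ofReal (d / 4)) (by simp; positivity)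
  set Fc : L2R := hφ2.toLp φ with hFc
  have hdist : dist F Fc ≤ d / 4 := by
    rw [Lp.dist_def]
    have h1 : (⇑F - ⇑Fc) =ᵐ[volume] (⇑F - φ) := by
      filter_upwards [hφ2.coeFn_toLp] with x hx
      simp only [Pi.sub_apply, hx, hFc]
    rw [eLpNorm_congr_ae h1]
    have := ENNReal.toReal_mono (by simp) hsub
    rwa [ENNReal.toReal_ofReal (by positivity)] at this
  have tri : d ≤ dist F Fc + (0 : ℝ) + dist F Fc := by
    calc d ≤ dist (U (WHMod a F)) (U (WHMod a Fc)) + dist (U (WHMod a Fc)) (WHTrans a (U Fc))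
        + dist (WHTrans a (U Fc)) (WHTrans a (U F)) := dist_triangle4 _ _ _ _
    _ = dist F Fc + 0 + dist F Fc := by
        rw [U.dist_map, dist_Mod, nice φ hc hs hφ2, dist_self, dist_Trans, U.dist_map,
          dist_comm Fc F]
  linarith

lemma orth_vanish {χ : L2R} (h : ∀ g' : L2R, (∀ᵐ x : ℝ, x ≤ 0 → g' x = 0) → ⟪g', χ⟫_ℂ = 0) :
    ∀ᵐ x : ℝ, 0 < x → (χ : ℝ → ℂ) x = 0 := by
  set φ : ℝ → ℂ := (Ioi (0:ℝ)).indicator (⇑χ) with hφdef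
  have hφ : MeasureTheory.MemLp φ 2 volume := (Lp.memLp χ).indicator measurableSet_Ioi
  set g' : L2R := hφ.toLp φ with hg'def
  have hg' : ∀ᵐ x : ℝ, x ≤ 0 → (g' : ℝ → ℂ) x = 0 := by
    filter_upwards [hφ.coeFn_toLp] with x hx hx0
    rw [hx, hφdef, indicator_of_notMem (by simpa using hx0)]
  have h0 := h g' hg'
  have hgg : ⟪g', g'⟫_ℂ = 0 := by
    rw [MeasureTheory.L2.inner_def] at h0 ⊢
    rw [← h0]
    apply MeasureTheory.integral_congr_ae
    filter_upwards [hφ.coeFn_toLp] with x hx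
    rw [RCLike.inner_apply, RCLike.inner_apply, hx]
    by_cases hx0 : x ∈ Ioi (0:ℝ)
    · rw [hφdef]; simp only [indicator_of_mem hx0]
    · rw [hφdef]; simp only [indicator_of_notMem hx0, map_zero, zero_mul, mul_zero]
  have hg0 : g' = 0 := inner_self_eq_zero.mp hgg
  have hφ0 : φ =ᵐ[volume] 0 := by
    have h1 : ⇑g' =ᵐ[volume] φ := hφ.coeFn_toLp
    have h2 : ⇑(0 : L2R) =ᵐ[volume] (0 : ℝ → ℂ) := Lp.coeFn_zero ℂ 2 volume
    rw [hg0] at h1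
    exact h1.symm.trans h2
  filter_upwards [hφ0] with x hx hx0
  have : φ x = χ x := indicator_of_mem (mem_Ioi.2 hx0) _
  rw [← this, hx]
  rfl

/-- A densely defined W_κ is symmetric iff κ is a.e. real-valued.  Symmetry is expressed
by ⟨g', W_κ g⟩ = ⟨W_κ g', g⟩ for all g, g' in the domain, written via the unitary
equivalence as integrals. -/
theorem wienerHopf_symmetric_iff_real
    (U : L2R ≃ₗᵢ[ℂ] L2R) (hU : IsFourierL2 U)
    (κ : ℝ → ℂ) (hκ : Measurable κ)
    (hdense : ∀ g : L2R, (∀ᵐ x : ℝ, x ≤ 0 → g x = 0) → g ∈ closure (WHDom U κ)) :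
    ((∀ g g' : L2R, g ∈ WHDom U κ → g' ∈ WHDom U κ →
        ∫ x : ℝ, conj ((U.symm g') x) * (κ x * (U.symm g) x) =
          ∫ x : ℝ, conj (κ x * (U.symm g') x) * (U.symm g) x) ↔
      ∀ᵐ x : ℝ ∂volume, (κ x).im = 0) := by
  have hκconj : Measurable fun x => conj (κ x) := Complex.continuous_conj.measurable.comp hκ
  constructor
  · intro hsym
    -- the conjugate symbol also gives Memℒp
    have hconjmem : ∀ g : L2R, g ∈ WHDom U κ →
        MeasureTheory.MemLp (fun x => conj (κ x) * (U.symm g) x) 2 volume := by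
      intro g hg
      refine hg.2.of_le (hκconj.aestronglyMeasurable.mul
        (Lp.aestronglyMeasurable (U.symm g))) ?_
      filter_upwards with x
      rw [norm_mul, norm_mul, RCLike.norm_conj]
    -- Step 1 : basic identity
    have step1 : ∀ g ∈ WHDom U κ, ∀ g' ∈ WHDom U κ,
        ∫ x : ℝ, conj ((U.symm g') x) *
          (κ x * (U.symm g) x - conj (κ x) * (U.symm g) x) = 0 := by
      intro g hg g' hg'
      have int1 : Integrable (fun x : ℝ => conj ((U.symm g') x) * (κ x * (U.symm g) x)) volume := by
        have h := MeasureTheory.L2.integrable_inner (𝕜 := ℂ) (U.symm g') (hg.2.toLp _)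
        simp only [RCLike.inner_apply] at h
        refine h.congr ?_
        filter_upwards [hg.2.coeFn_toLp] with x hx
        rw [hx]
        ring
      have int2 : Integrable (fun x : ℝ =>
          conj ((U.symm g') x) * (conj (κ x) * (U.symm g) x)) volume := by
        have h := MeasureTheory.L2.integrable_inner (𝕜 := ℂ) (U.symm g')
          ((hconjmem g hg).toLp _)
        simp only [RCLike.inner_apply] at h
        refine h.congr ?_
        filter_upwards [(hconjmem g hg).coeFn_toLp] with x hx
        rw [hx]
        ring
      have hsplit : ∫ x : ℝ, conj ((U.symm g') x) *
          (κ x * (U.symm g) x - conj (κ x) * (U.symm g) x)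
          = (∫ x : ℝ, conj ((U.symm g') x) * (κ x * (U.symm g) x))
            - ∫ x : ℝ, conj ((U.symm g') x) * (conj (κ x) * (U.symm g) x) := by
        rw [← MeasureTheory.integral_sub int1 int2]
        apply MeasureTheory.integral_congr_ae
        filter_upwards with x
        ring
      rw [hsplit, sub_eq_zero, hsym g g' hg hg']
      apply MeasureTheory.integral_congr_ae
      filter_upwards with x
      rw [map_mul]
      ring
    -- Step 2 : orthogonality against all of the positive half-line space
    have step2 : ∀ G ∈ WHDom U κ, ∀ Θ : L2R,
        (⇑Θ =ᵐ[volume] fun x => κ x * (U.symm G) x - conj (κ x) * (U.symm G) x) →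
        ∀ g'' : L2R, (∀ᵐ x : ℝ, x ≤ 0 → g'' x = 0) → ⟪g'', U Θ⟫_ℂ = 0 := by
      intro G hG Θ hΘ g'' hg''
      have hC : IsClosed {F : L2R | ⟪F, U Θ⟫_ℂ = 0} :=
        isClosed_eq (Continuous.inner continuous_id continuous_const) continuous_const
      have hDC : WHDom U κ ⊆ {F : L2R | ⟪F, U Θ⟫_ℂ = 0} := by
        intro g' hg'
        have h1 : ⟪U.symm g', Θ⟫_ℂ = 0 := by
          rw [MeasureTheory.L2.inner_def]
          rw [← step1 G hG g' hg']
          apply MeasureTheory.integral_congr_ae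
          filter_upwards [hΘ] with x hx
          rw [RCLike.inner_apply, hx]
          ring
        have h2 : ⟪U (U.symm g'), U Θ⟫_ℂ = ⟪U.symm g', Θ⟫_ℂ :=
          LinearIsometryEquiv.inner_map_map U _ _
        rw [mem_setOf_eq, ← U.apply_symm_apply g', h2, h1]
      exact closure_minimal hDC hC (hdense g'' hg'')
    -- Step 3 : the domain is invariant under right translations
    have step3 : ∀ G ∈ WHDom U κ, ∀ a : ℝ, 0 ≤ a → WHTrans a G ∈ WHDom U κ := by
      intro G hG a ha
      constructor
      · have h1 : ∀ᵐ x : ℝ, x - a ≤ 0 → (G : ℝ → ℂ) (x - a) = 0 := ae_shift a hG.1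
        filter_upwards [coe_Trans a G, h1] with x hx h1x hx0
        rw [hx]
        exact h1x (by linarith)
      · have hsymm : U.symm (WHTrans a G) = WHMod a (U.symm G) := by
          apply U.injective
          rw [U.apply_symm_apply, key2 U hU a (U.symm G), U.apply_symm_apply]
        refine hG.2.of_le (hκ.aestronglyMeasurable.mul
          (Lp.aestronglyMeasurable (U.symm (WHTrans a G)))) ?_
        have hcoe : ⇑(U.symm (WHTrans a G)) =ᵐ[volume] fun x => eMod a x * (U.symm G) x := by
          rw [hsymm]; exact coe_Mod a (U.symm G)
        filter_upwards [hcoe] with x hx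
        rw [hx, norm_mul, norm_mul, norm_mul, norm_eMod, one_mul, ← norm_mul]
    -- Master claim
    have master : ∀ g : L2R, g ∈ WHDom U κ →
        ∀ᵐ x : ℝ, (κ x).im ≠ 0 → (U.symm g : ℝ → ℂ) x = 0 := by
      intro g hg
      set ψ : ℝ → ℂ := fun x => κ x * (U.symm g) x - conj (κ x) * (U.symm g) x with hψdef
      have hψm : MeasureTheory.MemLp ψ 2 volume := hg.2.sub (hconjmem g hg)
      set Ψ : L2R := hψm.toLp ψ with hΨdef
      -- for every a ≥ 0 the translate kills (0,∞)
      have hvan : ∀ a : ℝ, 0 ≤ a → ∀ᵐ x : ℝ, 0 < x + a → (U Ψ : ℝ → ℂ) x = 0 := by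
        intro a ha
        have hTa : WHTrans a g ∈ WHDom U κ := step3 g hg a ha
        have hsymm : U.symm (WHTrans a g) = WHMod a (U.symm g) := by
          apply U.injective
          rw [U.apply_symm_apply, key2 U hU a (U.symm g), U.apply_symm_apply]
        have hΘcoe : ⇑(WHMod a Ψ) =ᵐ[volume]
            fun x => κ x * (U.symm (WHTrans a g)) x - conj (κ x) * (U.symm (WHTrans a g)) x := by
          have h1 : ⇑(U.symm (WHTrans a g)) =ᵐ[volume] fun x => eMod a x * (U.symm g) x := by
            rw [hsymm]; exact coe_Mod a (U.symm g)
          filter_upwards [coe_Mod a Ψ, hψm.coeFn_toLp, h1] with x h2 h3 h4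
          rw [h2, h4]
          have h3' : (Ψ : ℝ → ℂ) x = ψ x := h3
          rw [h3', hψdef]
          ring
        have horth := step2 (WHTrans a g) hTa (WHMod a Ψ) hΘcoe
        have hUmod : U (WHMod a Ψ) = WHTrans a (U Ψ) := key2 U hU a Ψ
        rw [hUmod] at horth
        have hv := orth_vanish horth
        have hv2 : ∀ᵐ x : ℝ, 0 < x → (U Ψ : ℝ → ℂ) (x - a) = 0 := by
          filter_upwards [hv, coe_Trans a (U Ψ)] with x h1 h2 h3
          rw [← h2]
          exact h1 h3
        have hv3 := ae_shift (-a) hv2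
        filter_upwards [hv3] with x h1 h2
        have := h1 (by simp only [sub_neg_eq_add]; linarith)
        simpa using this
      have hall : ∀ᵐ x : ℝ, ∀ n : ℕ, 0 < x + n → (U Ψ : ℝ → ℂ) x = 0 :=
        ae_all_iff.2 fun n => hvan n (Nat.cast_nonneg n)
      have hUΨ0 : ⇑(U Ψ) =ᵐ[volume] (0 : ℝ → ℂ) := by
        filter_upwards [hall] with x hx
        obtain ⟨n, hn⟩ := exists_nat_gt (-x)
        exact hx n (by linarith)
      have hΨ0 : Ψ = 0 := by
        apply U.injective
        rw [map_zero]
        exact Lp.ext (hUΨ0.trans (Lp.coeFn_zero ℂ 2 volume).symm)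
      have hψ0 : ψ =ᵐ[volume] 0 := by
        have h1 : ⇑Ψ =ᵐ[volume] ψ := hψm.coeFn_toLp
        rw [hΨ0] at h1
        exact h1.symm.trans (Lp.coeFn_zero ℂ 2 volume)
      filter_upwards [hψ0] with x hx him
      have hx' : (κ x - conj (κ x)) * (U.symm g) x = 0 := by
        rw [sub_mul]; exact hx
      rcases mul_eq_zero.mp hx' with h | h
      · exfalso
        rw [Complex.sub_conj] at h
        have := mul_eq_zero.mp h
        rcases this with h2 | h2
        · rw [Complex.ofReal_eq_zero] at h2
          exact him (by linarith)
        · exact Complex.I_ne_zero h2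
      · exact h
    -- Conclusion using the explicit Hardy function f₀
    set F₀ : L2R := f₀_mem2.toLp f₀ with hF₀def
    set G₀ : L2R := U F₀ with hG₀def
    have hG₀coe : ⇑G₀ =ᵐ[volume] hfun := by
      have := hU f₀ f₀_int f₀_mem2
      rw [fourier_f₀] at this
      exact this
    have hG₀P : ∀ᵐ x : ℝ, x ≤ 0 → (G₀ : ℝ → ℂ) x = 0 := by
      filter_upwards [hG₀coe] with x hx hx0
      rw [hx, hfun_zero hx0]
    have hcl : G₀ ∈ closure (WHDom U κ) := hdense G₀ hG₀P
    have hS : MeasurableSet {x : ℝ | (κ x).im ≠ 0} := by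
      have h1 : Measurable fun x => (κ x).im := Complex.measurable_im.comp hκ
      exact (h1 (measurableSet_singleton 0)).compl
    set S := {x : ℝ | (κ x).im ≠ 0} with hSdef
    have claim : ∀ ε : ℝ, 0 < ε → eLpNorm (S.indicator f₀) 2 volume ≤ ENNReal.ofReal ε := by
      intro ε hε
      obtain ⟨g, hgD, hgdist⟩ := Metric.mem_closure_iff.1 hcl ε hε
      have hmg := master g hgD
      have h1 : S.indicator f₀ =ᵐ[volume] S.indicator (fun x => f₀ x - (U.symm g : ℝ → ℂ) x) := by
        filter_upwards [hmg] with x hx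
        by_cases hxS : x ∈ S
        · rw [indicator_of_mem hxS, indicator_of_mem hxS, hx hxS, sub_zero]
        · rw [indicator_of_notMem hxS, indicator_of_notMem hxS]
      calc eLpNorm (S.indicator f₀) 2 volume
          = eLpNorm (S.indicator (fun x => f₀ x - (U.symm g : ℝ → ℂ) x)) 2 volume :=
            eLpNorm_congr_ae h1
      _ ≤ eLpNorm (fun x => f₀ x - (U.symm g : ℝ → ℂ) x) 2 volume := eLpNorm_indicator_le _
      _ = eLpNorm (⇑F₀ - ⇑(U.symm g)) 2 volume := by
            apply eLpNorm_congr_ae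
            filter_upwards [f₀_mem2.coeFn_toLp] with x hx
            simp only [Pi.sub_apply, hF₀def, hx]
      _ = edist F₀ (U.symm g) := (Lp.edist_def F₀ (U.symm g)).symm
      _ = ENNReal.ofReal (dist F₀ (U.symm g)) := edist_dist _ _
      _ ≤ ENNReal.ofReal ε := by
            apply ENNReal.ofReal_le_ofReal
            have : dist F₀ (U.symm g) = dist (U F₀) (U (U.symm g)) := (U.dist_map _ _).symm
            rw [this, U.apply_symm_apply]
            exact le_of_lt hgdist
    have hL0 : eLpNorm (S.indicator f₀) 2 volume = 0 := by
      by_contra hL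
      rcases eq_or_ne (eLpNorm (S.indicator f₀) 2 volume) ⊤ with htop | htop
      · have h2 := claim 1 one_pos
        rw [htop] at h2
        exact (not_le.2 (lt_of_le_of_lt (le_refl (ENNReal.ofReal 1)) ENNReal.ofReal_lt_top)) h2
      · have hpos : 0 < (eLpNorm (S.indicator f₀) 2 volume).toReal :=
          ENNReal.toReal_pos hL htop
        have := claim ((eLpNorm (S.indicator f₀) 2 volume).toReal / 2) (by linarith)
        have hlt : ENNReal.ofReal ((eLpNorm (S.indicator f₀) 2 volume).toReal / 2)
            < eLpNorm (S.indicator f₀) 2 volume := by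
          rw [ENNReal.ofReal_lt_iff_lt_toReal (by linarith) htop]
          linarith
        exact (not_le.2 hlt) this
    have hind0 : S.indicator f₀ =ᵐ[volume] 0 :=
      (eLpNorm_eq_zero_iff (f₀_cont.aestronglyMeasurable.indicator hS) two_ne_zero).mp hL0
    filter_upwards [hind0] with x hx
    by_contra him
    have hxS : x ∈ S := him
    rw [indicator_of_mem hxS] at hx
    exact f₀_ne x hx
  · intro hre g g' _ _
    apply MeasureTheory.integral_congr_ae
    filter_upwards [hre] with x hx
    have hconj : conj (κ x) = κ x := Complex.conj_eq_iff_im.2 hx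
    rw [map_mul, hconj]
    ring
end
end

section
/- Let κ : ℝ → ℂ be measurable and nonnegative a.e., set E = κ⁻¹(ℝ∖{0}) and define A = P₊ F M(√κ) P_E* : L²(E) → L²(ℝ₊) with maximal domain. Then A is densely defined, A* = P_E M(√κ) F⁻¹ P₊*, and the Wiener–Hopf operator satisfies W_κ = A A*. -/
open MeasureTheory Complex Real Set FourierTransform
open scoped ENNReal ComplexConjugate

noncomputable section

/-- √κ, viewed as a complex-valued function. -/
def sqrtSymb (κ : ℝ → ℝ) : ℝ → ℂ := fun x => (Real.sqrt (κ x) : ℂ)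

/-- The domain of A = P₊ F M(√κ) P_E* where E = κ⁻¹(ℝ∖{0}):  L²(E) is modelled as the
subspace of L²(ℝ) of functions vanishing a.e. off E. -/
def DomA (κ : ℝ → ℝ) : Set L2R :=
  {f : L2R | (∀ᵐ x : ℝ, κ x = 0 → f x = 0) ∧
    MeasureTheory.MemLp (fun x : ℝ => sqrtSymb κ x * f x) 2 volume}

open Filter Topology

namespace WHAux

local notation "⟪" x ", " y "⟫" => @inner ℂ _ _ x y

lemma conj_mul_self (a : ℂ) : conj a * a = ((‖a‖ ^ 2 : ℝ) : ℂ) := by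
  rw [mul_comm, Complex.mul_conj]
  norm_cast
  rw [Complex.normSq_eq_norm_sq]

lemma integral_conj_mul (f g : L2R) :
    ∫ x : ℝ, conj (f x) * g x = ⟪f, g⟫ := by
  rw [MeasureTheory.L2.inner_def]
  refine integral_congr_ae (Eventually.of_forall fun x => ?_)
  simp [RCLike.inner_apply]; ring

lemma L2_norm_sq (v : L2R) : (‖v‖ : ℝ) ^ 2 = ∫ x : ℝ, ‖v x‖ ^ 2 := by
  have h1 : ((‖v‖ : ℂ)) ^ 2 = ⟪v, v⟫ := (inner_self_eq_norm_sq_to_K v).symm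
  rw [MeasureTheory.L2.inner_def] at h1
  have h2 : (∫ x : ℝ, ⟪v x, v x⟫ ∂(volume)) = (((∫ x : ℝ, ‖v x‖ ^ 2) : ℝ) : ℂ) := by
    calc ∫ x : ℝ, ⟪v x, v x⟫ ∂(volume) = ∫ x : ℝ, ((‖v x‖ ^ 2 : ℝ) : ℂ) := by
          refine integral_congr_ae (Eventually.of_forall fun x => ?_)
          show ⟪v x, v x⟫ = _
          rw [RCLike.inner_apply, mul_comm]; exact conj_mul_self _
      _ = (((∫ x : ℝ, ‖v x‖ ^ 2) : ℝ) : ℂ) := integral_ofReal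
  rw [h2] at h1
  exact_mod_cast h1

lemma sqrtSymb_meas {κ : ℝ → ℝ} (hκm : Measurable κ) : Measurable (sqrtSymb κ) :=
  Complex.measurable_ofReal.comp (Real.continuous_sqrt.measurable.comp hκm)

lemma norm_sqrtSymb (κ : ℝ → ℝ) (x : ℝ) : ‖sqrtSymb κ x‖ = Real.sqrt (κ x) := by
  simp [sqrtSymb, Complex.norm_real, _root_.abs_of_nonneg (Real.sqrt_nonneg _)]

lemma asm_normsq {v : ℝ → ℂ} (hv : AEStronglyMeasurable v (volume : Measure ℝ)) :
    AEStronglyMeasurable (fun x => ‖v x‖ ^ 2) (volume : Measure ℝ) := by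
  exact hv.norm.pow 2


lemma adj_ident (U : L2R ≃ₗᵢ[ℂ] L2R) (κ : ℝ → ℝ) (h f : L2R)
    (hf2 : MeasureTheory.MemLp (fun x : ℝ => sqrtSymb κ x * f x) 2 volume) :
    ∫ x : ℝ, conj ((U (hf2.toLp _)) x) * h x
      = ∫ x : ℝ, conj (f x) * (sqrtSymb κ x * (U.symm h) x) := by
  set g : L2R := hf2.toLp _ with hg
  rw [integral_conj_mul (U g) h]
  have e2 : ⟪U g, h⟫ = ⟪g, U.symm h⟫ := by
    conv_lhs => rw [← U.apply_symm_apply h]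
    exact U.inner_map_map g (U.symm h)
  rw [e2, ← integral_conj_mul g (U.symm h)]
  refine integral_congr_ae ?_
  filter_upwards [hf2.coeFn_toLp] with x hx
  rw [← hg] at hx
  simp only [hx, sqrtSymb, map_mul, Complex.conj_ofReal]
  ring

lemma partA (κ : ℝ → ℝ) (hκm : Measurable κ) (f₀ : L2R)
    (h0 : ∀ᵐ x : ℝ, κ x = 0 → f₀ x = 0) : f₀ ∈ closure (DomA κ) := by
  haveI : Fact ((1:ℝ≥0∞) ≤ 2) := ⟨one_le_two⟩
  set S : ℕ → Set ℝ := fun n => {x : ℝ | κ x ≤ (n:ℝ)} with hS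
  have hSm : ∀ n, MeasurableSet (S n) := fun n => hκm measurableSet_Iic
  set g : ℕ → ℝ → ℂ := fun n => (S n).indicator (⇑f₀) with hgdef
  have hg : ∀ n, MemLp (g n) 2 volume := fun n => (Lp.memLp f₀).indicator (hSm n)
  have hdom : ∀ n, (hg n).toLp (g n) ∈ DomA κ := by
    intro n
    constructor
    · filter_upwards [(hg n).coeFn_toLp, h0] with x hx h0x hk
      rw [hx]
      by_cases hxS : x ∈ S n
      · simp [hgdef, indicator_of_mem hxS, h0x hk]
      · simp [hgdef, indicator_of_notMem hxS]
    · have hmul : MemLp (fun x : ℝ => sqrtSymb κ x * g n x) 2 volume := by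
        refine MemLp.mono' (((Lp.memLp f₀).norm).const_mul (Real.sqrt n)) ?_ ?_
        · exact (sqrtSymb_meas hκm).aestronglyMeasurable.mul
            ((Lp.aestronglyMeasurable f₀).indicator (hSm n))
        · refine Eventually.of_forall fun x => ?_
          by_cases hxS : x ∈ S n
          · simp only [hgdef, indicator_of_mem hxS, norm_mul, norm_sqrtSymb]
            exact mul_le_mul_of_nonneg_right (Real.sqrt_le_sqrt hxS) (norm_nonneg _)
          · simp only [hgdef, indicator_of_notMem hxS, mul_zero, norm_zero]
            positivity
      refine hmul.ae_eq ?_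
      filter_upwards [(hg n).coeFn_toLp] with x hx
      rw [hx]
  have hsq : Tendsto (fun n => ‖(hg n).toLp (g n) - f₀‖ ^ 2) atTop (𝓝 0) := by
    have heq : ∀ n, ‖(hg n).toLp (g n) - f₀‖ ^ 2 = ∫ x : ℝ, ‖g n x - f₀ x‖ ^ 2 := by
      intro n
      rw [L2_norm_sq]
      refine integral_congr_ae ?_
      filter_upwards [Lp.coeFn_sub ((hg n).toLp (g n)) f₀, (hg n).coeFn_toLp] with x h1 h2
      rw [h1, Pi.sub_apply, h2]
    have hmeas : ∀ n, AEStronglyMeasurable (fun x : ℝ => ‖g n x - f₀ x‖ ^ 2) volume :=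
      fun n => asm_normsq (((Lp.aestronglyMeasurable f₀).indicator (hSm n)).sub
        (Lp.aestronglyMeasurable f₀))
    have hint : Integrable (fun x : ℝ => ‖f₀ x‖ ^ 2) volume :=
      (memLp_two_iff_integrable_sq_norm (Lp.aestronglyMeasurable f₀)).mp (Lp.memLp f₀)
    have hbdd : ∀ n, ∀ᵐ x : ℝ, ‖‖g n x - f₀ x‖ ^ 2‖ ≤ ‖f₀ x‖ ^ 2 := by
      intro n
      refine Eventually.of_forall fun x => ?_
      rw [Real.norm_of_nonneg (sq_nonneg _)]
      by_cases hxS : x ∈ S n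
      · simp [hgdef, indicator_of_mem hxS, sq_nonneg]
      · simp [hgdef, indicator_of_notMem hxS]
    have hlim : ∀ᵐ x : ℝ, Tendsto (fun n => ‖g n x - f₀ x‖ ^ 2) atTop (𝓝 0) := by
      refine Eventually.of_forall fun x => ?_
      have hev : ∀ᶠ n in atTop, ‖g n x - f₀ x‖ ^ 2 = 0 := by
        filter_upwards [eventually_ge_atTop ⌈κ x⌉₊] with n hn
        have hxS : x ∈ S n := le_trans (Nat.le_ceil _) (by exact_mod_cast Nat.cast_le.mpr hn)
        simp [hgdef, indicator_of_mem hxS]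
      exact Tendsto.congr' (hev.mono fun n h => h.symm) tendsto_const_nhds
    have := tendsto_integral_of_dominated_convergence (μ := volume)
      (F := fun n x => ‖g n x - f₀ x‖ ^ 2) (f := fun _ => (0:ℝ))
      (bound := fun x => ‖f₀ x‖ ^ 2) hmeas hint hbdd hlim
    simp only [integral_zero] at this
    simpa [heq] using this
  have key : Tendsto (fun n => ‖(hg n).toLp (g n) - f₀‖) atTop (𝓝 0) := by
    have h2 : Tendsto (fun n => Real.sqrt (‖(hg n).toLp (g n) - f₀‖ ^ 2)) atTop
        (𝓝 (Real.sqrt 0)) := (Real.continuous_sqrt.tendsto 0).comp hsq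
    rw [Real.sqrt_zero] at h2
    exact h2.congr fun n => Real.sqrt_sq (norm_nonneg _)
  have ht : Tendsto (fun n => (hg n).toLp (g n)) atTop (𝓝 f₀) := by
    rw [tendsto_iff_dist_tendsto_zero]
    simpa [dist_eq_norm] using key
  exact mem_closure_of_tendsto ht (Eventually.of_forall hdom)



lemma sqrt_le_one_add (t : ℝ) (ht : 0 ≤ t) : Real.sqrt t ≤ 1 + t := by
  nlinarith [Real.sq_sqrt ht, Real.sqrt_nonneg t, sq_nonneg (Real.sqrt t - 1)]

lemma partB2 (U : L2R ≃ₗᵢ[ℂ] L2R) (κ : ℝ → ℝ) (hκm : Measurable κ) (h : L2R) :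
    (∃ C : ℝ, 0 ≤ C ∧ ∀ (f : L2R) (hf : f ∈ DomA κ),
        ‖∫ x : ℝ, conj ((U (hf.2.toLp _)) x) * h x‖ ≤ C * ‖f‖) ↔
      MeasureTheory.MemLp (fun x : ℝ => sqrtSymb κ x * (U.symm h) x) 2 volume := by
  constructor
  · rintro ⟨C, hC0, hC⟩
    have hψ : MemLp (⇑(U.symm h)) 2 volume := Lp.memLp _
    have hψm : AEStronglyMeasurable (⇑(U.symm h)) volume := Lp.aestronglyMeasurable _
    set q : ℝ → ℂ := fun x => sqrtSymb κ x * (U.symm h) x with hqdef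
    have hqm : AEStronglyMeasurable q volume :=
      (sqrtSymb_meas hκm).aestronglyMeasurable.mul hψm
    set S : ℕ → Set ℝ := fun n => {x : ℝ | κ x ≤ (n:ℝ)} with hS
    have hSm : ∀ n, MeasurableSet (S n) := fun n => hκm measurableSet_Iic
    have hψsq : Integrable (fun x : ℝ => ‖(U.symm h) x‖ ^ 2) volume :=
      (memLp_two_iff_integrable_sq_norm hψm).mp hψ
    have hb : ∀ n : ℕ, ∀ x ∈ S n, ‖q x‖ ≤ Real.sqrt n * ‖(U.symm h) x‖ := by
      intro n x hx
      rw [hqdef]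
      rw [norm_mul, norm_sqrtSymb]
      exact mul_le_mul_of_nonneg_right (Real.sqrt_le_sqrt hx) (norm_nonneg _)
    set Fn : ℕ → ℝ → ℝ := fun n => (S n).indicator (fun x => ‖q x‖ ^ 2) with hFn
    have hFnm : ∀ n, AEStronglyMeasurable (Fn n) volume :=
      fun n => (asm_normsq hqm).indicator (hSm n)
    have hFn_nonneg : ∀ n x, 0 ≤ Fn n x :=
      fun n x => indicator_nonneg (fun y _ => sq_nonneg _) x
    have hFn_le : ∀ n : ℕ, ∀ x, Fn n x ≤ (n : ℝ) * ‖(U.symm h) x‖ ^ 2 := by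
      intro n x
      by_cases hx : x ∈ S n
      · rw [hFn]; simp only [indicator_of_mem hx]
        calc ‖q x‖ ^ 2 ≤ (Real.sqrt n * ‖(U.symm h) x‖) ^ 2 :=
              pow_le_pow_left₀ (norm_nonneg _) (hb n x hx) 2
          _ = (n : ℝ) * ‖(U.symm h) x‖ ^ 2 := by
              rw [mul_pow, Real.sq_sqrt (Nat.cast_nonneg n)]
      · rw [hFn]; simp only [indicator_of_notMem hx]; positivity
    have hFn_int : ∀ n, Integrable (Fn n) volume := by
      intro n
      refine Integrable.mono' (hψsq.const_mul (n:ℝ)) (hFnm n) ?_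
      refine Eventually.of_forall fun x => ?_
      rw [Real.norm_of_nonneg (hFn_nonneg n x)]
      exact hFn_le n x
    set J : ℕ → ℝ := fun n => ∫ x : ℝ, Fn n x with hJ
    have hJ0 : ∀ n, 0 ≤ J n := fun n => integral_nonneg (hFn_nonneg n)
    set φ : ℕ → ℝ → ℂ := fun n => (S n).indicator q with hφ
    have hφm : ∀ n, MemLp (φ n) 2 volume := by
      intro n
      refine MemLp.mono' ((hψ.norm).const_mul (Real.sqrt n)) ?_ ?_
      · exact hqm.indicator (hSm n)
      · refine Eventually.of_forall fun x => ?_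
        by_cases hx : x ∈ S n
        · rw [hφ]; simp only [indicator_of_mem hx]; exact hb n x hx
        · rw [hφ]; simp only [indicator_of_notMem hx, norm_zero]; positivity
    have hdom : ∀ n, (hφm n).toLp (φ n) ∈ DomA κ := by
      intro n
      constructor
      · filter_upwards [(hφm n).coeFn_toLp] with x hx hk
        rw [hx, hφ]
        have hq0 : q x = 0 := by
          rw [hqdef]; simp [sqrtSymb, hk]
        by_cases hxS : x ∈ S n
        · simp [indicator_of_mem hxS, hq0]
        · simp [indicator_of_notMem hxS]
      · have hmul : MemLp (fun x : ℝ => sqrtSymb κ x * φ n x) 2 volume := by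
          refine MemLp.mono' ((hψ.norm).const_mul (n:ℝ)) ?_ ?_
          · exact (sqrtSymb_meas hκm).aestronglyMeasurable.mul (hqm.indicator (hSm n))
          · refine Eventually.of_forall fun x => ?_
            by_cases hx : x ∈ S n
            · rw [hφ]; simp only [indicator_of_mem hx]
              rw [norm_mul, norm_sqrtSymb]
              calc Real.sqrt (κ x) * ‖q x‖
                  ≤ Real.sqrt n * (Real.sqrt n * ‖(U.symm h) x‖) :=
                    mul_le_mul (Real.sqrt_le_sqrt hx) (hb n x hx) (norm_nonneg _)
                      (Real.sqrt_nonneg _)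
                _ = (Real.sqrt n * Real.sqrt n) * ‖(U.symm h) x‖ := by ring
                _ = (n : ℝ) * ‖(U.symm h) x‖ := by
                    rw [Real.mul_self_sqrt (Nat.cast_nonneg n)]
            · rw [hφ]; simp only [indicator_of_notMem hx, mul_zero, norm_zero]; positivity
        refine hmul.ae_eq ?_
        filter_upwards [(hφm n).coeFn_toLp] with x hx
        rw [hx]
    have hpair : ∀ n, ∫ x : ℝ, conj ((((hφm n).toLp (φ n)) : L2R) x) * q x = ((J n : ℝ) : ℂ) := by
      intro n
      have heq : ∫ x : ℝ, conj ((((hφm n).toLp (φ n)) : L2R) x) * q x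
          = ∫ x : ℝ, ((Fn n x : ℝ) : ℂ) := by
        refine integral_congr_ae ?_
        filter_upwards [(hφm n).coeFn_toLp] with x hx
        rw [hx, hφ]
        by_cases hxS : x ∈ S n
        · simp only [indicator_of_mem hxS, hFn]
          exact conj_mul_self _
        · simp [indicator_of_notMem hxS, hFn]
      rw [heq]; exact integral_ofReal
    have hnorm : ∀ n, ‖(hφm n).toLp (φ n)‖ ^ 2 = J n := by
      intro n
      rw [L2_norm_sq]
      refine integral_congr_ae ?_
      filter_upwards [(hφm n).coeFn_toLp] with x hx
      rw [hx, hφ]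
      by_cases hxS : x ∈ S n
      · simp [indicator_of_mem hxS, hFn]
      · simp [indicator_of_notMem hxS, hFn]
    have hJC : ∀ n, J n ≤ C ^ 2 := by
      intro n
      have h1 := hC ((hφm n).toLp (φ n)) (hdom n)
      rw [adj_ident U κ h ((hφm n).toLp (φ n)) (hdom n).2] at h1
      have hp := hpair n
      simp only [hqdef] at hp
      rw [hp] at h1
      have h2 : ‖((J n : ℝ) : ℂ)‖ = J n := by
        rw [Complex.norm_real]; exact Real.norm_of_nonneg (hJ0 n)
      rw [h2] at h1
      nlinarith [norm_nonneg ((hφm n).toLp (φ n)), hnorm n, hJ0 n]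
    have hsup : ∀ x, (⨆ n : ℕ, ENNReal.ofReal (Fn n x)) = ENNReal.ofReal (‖q x‖ ^ 2) := by
      intro x
      apply le_antisymm
      · refine iSup_le fun n => ENNReal.ofReal_le_ofReal ?_
        by_cases hx : x ∈ S n
        · rw [hFn]; simp [indicator_of_mem hx]
        · rw [hFn]; simp [indicator_of_notMem hx, sq_nonneg]
      · have hxS : x ∈ S ⌈κ x⌉₊ := by
          simp only [hS, mem_setOf_eq]; exact Nat.le_ceil _
        refine le_trans (le_of_eq ?_) (le_iSup _ ⌈κ x⌉₊)
        rw [hFn]; simp [indicator_of_mem hxS]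
    have hmono : ∀ x, Monotone fun n : ℕ => ENNReal.ofReal (Fn n x) := by
      intro x m n hmn
      refine ENNReal.ofReal_le_ofReal ?_
      rw [hFn]
      have hsub : S m ⊆ S n := by
        intro y hy
        simp only [hS, mem_setOf_eq] at hy ⊢
        exact le_trans hy (Nat.cast_le.mpr hmn)
      exact indicator_le_indicator_of_subset hsub (fun y => sq_nonneg _) x
    have hlint : (∫⁻ x : ℝ, ENNReal.ofReal (‖q x‖ ^ 2) ∂volume) ≤ ENNReal.ofReal (C ^ 2) := by
      have h1 : (∫⁻ x : ℝ, ENNReal.ofReal (‖q x‖ ^ 2) ∂volume)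
          = ⨆ n : ℕ, ∫⁻ x : ℝ, ENNReal.ofReal (Fn n x) ∂volume := by
        calc (∫⁻ x : ℝ, ENNReal.ofReal (‖q x‖ ^ 2) ∂volume)
            = ∫⁻ x : ℝ, ⨆ n : ℕ, ENNReal.ofReal (Fn n x) ∂volume :=
              lintegral_congr fun x => (hsup x).symm
          _ = ⨆ n : ℕ, ∫⁻ x : ℝ, ENNReal.ofReal (Fn n x) ∂volume :=
              lintegral_iSup' (fun n => ENNReal.measurable_ofReal.comp_aemeasurable
                (hFn_int n).aemeasurable) (Eventually.of_forall fun x => hmono x)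
      rw [h1]
      refine iSup_le fun n => ?_
      rw [← ofReal_integral_eq_lintegral_ofReal (hFn_int n)
        (Eventually.of_forall (hFn_nonneg n))]
      exact ENNReal.ofReal_le_ofReal (hJC n)
    refine (memLp_two_iff_integrable_sq_norm hqm).mpr ?_
    refine ⟨asm_normsq hqm, ?_⟩
    rw [hasFiniteIntegral_iff_ofReal (Eventually.of_forall fun x => sq_nonneg _)]
    exact lt_of_le_of_lt hlint ENNReal.ofReal_lt_top
  · intro hmem
    refine ⟨‖hmem.toLp _‖, norm_nonneg _, fun f hf => ?_⟩
    rw [adj_ident U κ h f hf.2]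
    have heq : ∫ x : ℝ, conj (f x) * (sqrtSymb κ x * (U.symm h) x)
        = ⟪f, hmem.toLp _⟫ := by
      rw [← integral_conj_mul f (hmem.toLp _)]
      refine integral_congr_ae ?_
      filter_upwards [hmem.coeFn_toLp] with x hx
      rw [hx]
    rw [heq]
    calc ‖⟪f, hmem.toLp _⟫‖ ≤ ‖f‖ * ‖hmem.toLp _‖ := norm_inner_le_norm _ _
      _ = ‖hmem.toLp _‖ * ‖f‖ := mul_comm _ _

lemma partC (U : L2R ≃ₗᵢ[ℂ] L2R) (κ : ℝ → ℝ) (hκm : Measurable κ)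
    (hκ0 : ∀ᵐ x : ℝ ∂volume, 0 ≤ κ x) (h : L2R) :
    (MeasureTheory.MemLp (fun x : ℝ => (κ x : ℂ) * (U.symm h) x) 2 volume ↔
      (MeasureTheory.MemLp (fun x : ℝ => sqrtSymb κ x * (U.symm h) x) 2 volume ∧
       MeasureTheory.MemLp
         (fun x : ℝ => sqrtSymb κ x * (sqrtSymb κ x * (U.symm h) x)) 2 volume)) ∧
    ∀ (h1 : MeasureTheory.MemLp (fun x : ℝ => (κ x : ℂ) * (U.symm h) x) 2 volume)
      (h2 : MeasureTheory.MemLp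
        (fun x : ℝ => sqrtSymb κ x * (sqrtSymb κ x * (U.symm h) x)) 2 volume),
      ∀ᵐ x : ℝ, 0 < x → (U (h1.toLp _)) x = (U (h2.toLp _)) x := by
  have hψ : MemLp (⇑(U.symm h)) 2 volume := Lp.memLp _
  have hae : (fun x : ℝ => (κ x : ℂ) * (U.symm h) x) =ᵐ[volume]
      (fun x : ℝ => sqrtSymb κ x * (sqrtSymb κ x * (U.symm h) x)) := by
    filter_upwards [hκ0] with x hx
    simp only [sqrtSymb]
    rw [← mul_assoc, ← Complex.ofReal_mul, Real.mul_self_sqrt hx]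
  constructor
  · constructor
    · intro h1
      refine ⟨?_, h1.ae_eq hae⟩
      refine MemLp.mono' ((hψ.norm).add h1.norm) ?_ ?_
      · exact (sqrtSymb_meas hκm).aestronglyMeasurable.mul (Lp.aestronglyMeasurable _)
      · filter_upwards [hκ0] with x hx
        rw [norm_mul, norm_sqrtSymb, Pi.add_apply]
        have hb : Real.sqrt (κ x) * ‖(U.symm h) x‖ ≤ (1 + κ x) * ‖(U.symm h) x‖ :=
          mul_le_mul_of_nonneg_right (sqrt_le_one_add _ hx) (norm_nonneg _)
        calc Real.sqrt (κ x) * ‖(U.symm h) x‖ ≤ (1 + κ x) * ‖(U.symm h) x‖ := hb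
          _ = ‖(U.symm h) x‖ + κ x * ‖(U.symm h) x‖ := by ring
          _ = ‖(U.symm h) x‖ + ‖(κ x : ℂ) * (U.symm h) x‖ := by
              rw [norm_mul, Complex.norm_real, Real.norm_of_nonneg hx]
    · rintro ⟨_, h2⟩
      exact h2.ae_eq hae.symm
  · intro h1 h2
    have heq : h1.toLp _ = h2.toLp _ := MemLp.toLp_congr h1 h2 hae
    rw [heq]
    exact Eventually.of_forall fun x _ => rfl

end WHAux


/-- For κ ≥ 0 and A = P₊ F M(√κ) P_E*:  (a) A is densely defined;
(b) A* = P_E M(√κ) F⁻¹ P₊*, i.e. for every h ∈ L²(ℝ₊) (modelled as an element of L²(ℝ)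
vanishing a.e. on (-∞,0]) the adjoint identity ⟨A f, h⟩ = ⟨f, √κ · F⁻¹P₊*h⟩ holds
whenever √κ·F⁻¹P₊*h ∈ L², and h belongs to dom A* (the functional f ↦ ⟨A f, h⟩ is
bounded on dom A) exactly when √κ·F⁻¹P₊*h ∈ L²;
(c) W_κ = A A*: both domains and values coincide. -/
theorem wienerHopf_eq_AAstar
    (U : L2R ≃ₗᵢ[ℂ] L2R) (hU : IsFourierL2 U)
    (κ : ℝ → ℝ) (hκm : Measurable κ) (hκ0 : ∀ᵐ x : ℝ ∂volume, 0 ≤ κ x) :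
    -- (a) A is densely defined in L²(E)
    (∀ f₀ : L2R, (∀ᵐ x : ℝ, κ x = 0 → f₀ x = 0) → f₀ ∈ closure (DomA κ)) ∧
    -- (b) A* = P_E M(√κ) F⁻¹ P₊*
    (∀ h : L2R, (∀ᵐ x : ℝ, x ≤ 0 → h x = 0) →
      ((MeasureTheory.MemLp (fun x : ℝ => sqrtSymb κ x * (U.symm h) x) 2 volume →
          ∀ (f : L2R) (hf : f ∈ DomA κ),
            ∫ x : ℝ, conj ((U (hf.2.toLp _)) x) * h x =
              ∫ x : ℝ, conj (f x) * (sqrtSymb κ x * (U.symm h) x)) ∧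
       ((∃ C : ℝ, 0 ≤ C ∧ ∀ (f : L2R) (hf : f ∈ DomA κ),
            ‖∫ x : ℝ, conj ((U (hf.2.toLp _)) x) * h x‖ ≤ C * ‖f‖) ↔
          MeasureTheory.MemLp (fun x : ℝ => sqrtSymb κ x * (U.symm h) x) 2 volume))) ∧
    -- (c) W_κ = A A*
    (∀ h : L2R, (∀ᵐ x : ℝ, x ≤ 0 → h x = 0) →
      (MeasureTheory.MemLp (fun x : ℝ => (κ x : ℂ) * (U.symm h) x) 2 volume ↔
        (MeasureTheory.MemLp (fun x : ℝ => sqrtSymb κ x * (U.symm h) x) 2 volume ∧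
         MeasureTheory.MemLp
           (fun x : ℝ => sqrtSymb κ x * (sqrtSymb κ x * (U.symm h) x)) 2 volume)) ∧
      ∀ (h1 : MeasureTheory.MemLp (fun x : ℝ => (κ x : ℂ) * (U.symm h) x) 2 volume)
        (h2 : MeasureTheory.MemLp
          (fun x : ℝ => sqrtSymb κ x * (sqrtSymb κ x * (U.symm h) x)) 2 volume),
        ∀ᵐ x : ℝ, 0 < x → (U (h1.toLp _)) x = (U (h2.toLp _)) x) := by
  refine ⟨fun f₀ h0 => WHAux.partA κ hκm f₀ h0,
    fun h _ => ⟨fun _ f hf => WHAux.adj_ident U κ h f hf.2, WHAux.partB2 U κ hκm h⟩,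
    fun h _ => WHAux.partC U κ hκm hκ0 h⟩
end
end

section
/- Define Q₀ = 1, Q₁(ξ) = 2ξ − 1/3, and Q_{n+1}(ξ) = 2ξQ_n(ξ) − Q_{n−1}(ξ) for n ≥ 1 (equivalently Q_n = U_n − (1/3)U_{n−1} where U_n are Chebyshev polynomials of the second kind). Then (Q_n)_{n≥0} is an orthonormal sequence in L²(−1,1) with respect to the weight function ξ ↦ (9/π)·√(1−ξ²)/(5−3ξ), i.e. ∫_{−1}^{1} Q_m(ξ)Q_n(ξ)·(9/π)·√(1−ξ²)/(5−3ξ) dξ = δ_{mn}. -/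
open MeasureTheory Real Polynomial intervalIntegral

noncomputable section

lemma denom_pos (θ : ℝ) : 0 < 5 - 3 * Real.cos θ := by
  nlinarith [Real.neg_one_le_cos θ, Real.cos_le_one θ]

lemma sin_mul_sin (x y : ℝ) : Real.sin x * Real.sin y = (Real.cos (x - y) - Real.cos (x + y)) / 2 := by
  rw [Real.cos_sub, Real.cos_add]; ring

lemma key_trig (a b t : ℝ) :
    (Real.sin (a + t) - 1/3 * Real.sin a) * (Real.sin (b + t) - 1/3 * Real.sin b) =
      5/9 * Real.cos (a - b) - 1/2 * Real.cos (a + b + 2*t) - 1/6 * Real.cos (a - b + t)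
      - 1/6 * Real.cos (a - b - t) + 1/3 * Real.cos (a + b + t) - 1/18 * Real.cos (a + b) := by
  simp only [Real.sin_add, Real.cos_add, Real.sin_sub, Real.cos_sub, Real.cos_two_mul,
    Real.sin_two_mul]
  linear_combination Real.cos a * Real.cos b * Real.sin_sq_add_cos_sq t



lemma cont_inv_denom : Continuous fun θ : ℝ => (5 - 3 * Real.cos θ)⁻¹ := by
  exact (continuous_const.sub (continuous_const.mul Real.continuous_cos)).inv₀
    fun x => (denom_pos x).ne'

lemma hasDerivAt_F (θ : ℝ) :
    HasDerivAt (fun θ : ℝ => 1/4 * (θ + 2 * Real.arctan (Real.sin θ / (3 - Real.cos θ))))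
      ((5 - 3 * Real.cos θ)⁻¹) θ := by
  have h3 : (3 : ℝ) - Real.cos θ ≠ 0 := by
    nlinarith [Real.neg_one_le_cos θ, Real.cos_le_one θ]
  have hu : HasDerivAt (fun θ : ℝ => Real.sin θ / (3 - Real.cos θ))
      ((Real.cos θ * (3 - Real.cos θ) - Real.sin θ * Real.sin θ) / (3 - Real.cos θ)^2) θ := by
    have := (Real.hasDerivAt_sin θ).div
      ((hasDerivAt_const θ (3:ℝ)).sub (Real.hasDerivAt_cos θ)) h3
    refine this.congr_deriv ?_; simp only [Pi.sub_apply]; ring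
  have ha := hu.arctan
  have h := ((hasDerivAt_id θ).add (ha.const_mul (2:ℝ))).const_mul (1/4 : ℝ)
  refine h.congr_deriv ?_
  have hD := denom_pos θ
  have h1 : 1 + (Real.sin θ / (3 - Real.cos θ))^2
      = (10 - 6 * Real.cos θ) / (3 - Real.cos θ)^2 := by
    field_simp
    nlinarith [Real.sin_sq_add_cos_sq θ]
  rw [h1]
  have hss : Real.sin θ * Real.sin θ = 1 - Real.cos θ^2 := by
    nlinarith [Real.sin_sq_add_cos_sq θ]
  rw [hss]
  have h10 : (10:ℝ) - 6 * Real.cos θ ≠ 0 := by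
    have := denom_pos θ; intro h'; nlinarith
  have h5 := (denom_pos θ).ne'
  field_simp
  linear_combination (-8 : ℝ) * inv_mul_cancel₀ h5

lemma I_zero : ∫ θ in (0:ℝ)..π, (5 - 3 * Real.cos θ)⁻¹ = π / 4 := by
  have := intervalIntegral.integral_eq_sub_of_hasDerivAt
    (f := fun θ : ℝ => 1/4 * (θ + 2 * Real.arctan (Real.sin θ / (3 - Real.cos θ))))
    (fun x _ => hasDerivAt_F x) (cont_inv_denom.intervalIntegrable 0 π)
  rw [this]
  simp [Real.sin_pi, Real.cos_pi, Real.sin_zero, Real.cos_zero]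
  ring

lemma cont_ck (c : ℝ) : Continuous fun θ : ℝ => Real.cos (c * θ) := by fun_prop

lemma intble (c : ℝ) :
    IntervalIntegrable (fun θ : ℝ => Real.cos (c * θ) * (5 - 3 * Real.cos θ)⁻¹)
      volume 0 π :=
  ((cont_ck c).mul cont_inv_denom).intervalIntegrable 0 π

lemma integral_cos_mul (c : ℝ) (hc : c ≠ 0) :
    ∫ θ in (0:ℝ)..π, Real.cos (c * θ) = Real.sin (c * π) / c := by
  have h : ∀ x ∈ Set.uIcc (0:ℝ) π, HasDerivAt (fun θ => Real.sin (c * θ) / c)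
      (Real.cos (c * x)) x := by
    intro x _
    have := ((Real.hasDerivAt_sin (c * x)).comp x
      ((hasDerivAt_id x).const_mul c)).div_const c
    simpa [mul_comm, mul_div_assoc, mul_div_cancel_left₀ _ hc] using this
  rw [intervalIntegral.integral_eq_sub_of_hasDerivAt h
    ((cont_ck c).intervalIntegrable 0 π)]
  simp

lemma integral_cos_nat_mul (k : ℕ) (hk : k ≠ 0) :
    ∫ θ in (0:ℝ)..π, Real.cos (k * θ) = 0 := by
  rw [integral_cos_mul k (by exact_mod_cast hk), Real.sin_nat_mul_pi, zero_div]

lemma I_one : ∫ θ in (0:ℝ)..π, Real.cos θ * (5 - 3 * Real.cos θ)⁻¹ = π / 12 := by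
  have hptw : ∀ θ : ℝ, Real.cos θ * (5 - 3 * Real.cos θ)⁻¹ =
      (5/3) * (5 - 3 * Real.cos θ)⁻¹ - 1/3 := by
    intro θ
    have h := (denom_pos θ).ne'
    have this : (5 - 3 * Real.cos θ)⁻¹ * (5 - 3 * Real.cos θ) = 1 := inv_mul_cancel₀ h
    linear_combination (-1/3 : ℝ) * this
  rw [intervalIntegral.integral_congr (fun θ _ => hptw θ),
    intervalIntegral.integral_sub (show
      IntervalIntegrable (fun θ : ℝ => 5/3 * (5 - 3 * Real.cos θ)⁻¹) volume 0 π from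
      (continuous_const.mul cont_inv_denom).intervalIntegrable 0 π)
      (intervalIntegrable_const),
    intervalIntegral.integral_const_mul, I_zero]
  simp
  ring

lemma I_cos : ∀ k : ℕ, ∫ θ in (0:ℝ)..π, Real.cos (k * θ) * (5 - 3 * Real.cos θ)⁻¹
    = π / (4 * 3 ^ k)
  | 0 => by simpa using I_zero
  | 1 => by rw [show (4:ℝ) * 3 ^ 1 = 12 by norm_num]; simpa using I_one
  | (k+2) => by
    have hk := I_cos k
    have hk1 := I_cos (k+1)
    have hptw : ∀ θ : ℝ, Real.cos ((↑(k+2) : ℝ) * θ) * (5 - 3 * Real.cos θ)⁻¹ =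
        (10/3) * (Real.cos ((↑(k+1) : ℝ) * θ) * (5 - 3 * Real.cos θ)⁻¹)
        - (2/3) * Real.cos ((↑(k+1) : ℝ) * θ)
        - Real.cos ((k : ℝ) * θ) * (5 - 3 * Real.cos θ)⁻¹ := by
      intro θ
      have h := (denom_pos θ).ne'
      have e1 : (↑(k+2) : ℝ) * θ = ((↑(k+1) : ℝ) * θ) + θ := by push_cast; ring
      have e2 : ((k : ℝ)) * θ = ((↑(k+1) : ℝ) * θ) - θ := by push_cast; ring
      rw [e1, e2, Real.cos_add, Real.cos_sub]
      have this : (5 - 3 * Real.cos θ)⁻¹ * (5 - 3 * Real.cos θ) = 1 := inv_mul_cancel₀ h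
      linear_combination (-2/3 * Real.cos ((↑(k+1) : ℝ) * θ)) * this
    rw [intervalIntegral.integral_congr (fun θ _ => hptw θ),
      intervalIntegral.integral_sub
        (show IntervalIntegrable (fun θ : ℝ => (10/3) * (Real.cos ((↑(k+1) : ℝ) * θ) *
            (5 - 3 * Real.cos θ)⁻¹) - (2/3) * Real.cos ((↑(k+1) : ℝ) * θ)) volume 0 π from
          ((continuous_const.mul ((cont_ck _).mul cont_inv_denom)).sub
          (continuous_const.mul (cont_ck _))).intervalIntegrable 0 π)
        (intble k),
      intervalIntegral.integral_sub
        (show IntervalIntegrable (fun θ : ℝ => (10/3) * (Real.cos ((↑(k+1) : ℝ) * θ) *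
            (5 - 3 * Real.cos θ)⁻¹)) volume 0 π from
          (continuous_const.mul ((cont_ck _).mul cont_inv_denom)).intervalIntegrable 0 π)
        (show IntervalIntegrable (fun θ : ℝ => (2/3) * Real.cos ((↑(k+1) : ℝ) * θ)) volume 0 π from
          (continuous_const.mul (cont_ck _)).intervalIntegrable 0 π),
      intervalIntegral.integral_const_mul, intervalIntegral.integral_const_mul,
      hk, hk1, integral_cos_nat_mul (k+1) (Nat.succ_ne_zero k)]
    have h3 : (3:ℝ) ^ (k+2) = 9 * 3 ^ k := by rw [pow_add]; ring
    have h3' : (3:ℝ) ^ (k+1) = 3 * 3 ^ k := by rw [pow_add]; ring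
    have hp : (0:ℝ) < 3 ^ k := by positivity
    rw [h3, h3']
    field_simp
    ring

def lalescuQ (n : ℕ) : Polynomial ℝ :=
  Polynomial.Chebyshev.U ℝ (n : ℤ) - Polynomial.C (1 / 3) * Polynomial.Chebyshev.U ℝ ((n : ℤ) - 1)

lemma eval_Q (x : ℕ) (θ : ℝ) :
    (lalescuQ x).eval (Real.cos θ) * Real.sin θ
      = Real.sin (((x:ℝ) + 1) * θ) - 1/3 * Real.sin ((x:ℝ) * θ) := by
  have h1 := Polynomial.Chebyshev.U_real_cos θ (x : ℤ)
  have h2 := Polynomial.Chebyshev.U_real_cos θ ((x : ℤ) - 1)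
  simp only [lalescuQ, Polynomial.eval_sub, Polynomial.eval_mul, Polynomial.eval_C]
  push_cast at h1 h2 ⊢
  rw [show ((x:ℝ) - 1 + 1) * θ = (x:ℝ) * θ by ring] at h2
  linear_combination h1 - (1/3) * h2

lemma intble2 (a : ℝ) (k : ℕ) :
    IntervalIntegrable (fun θ : ℝ => a * (Real.cos ((k:ℝ) * θ) * (5 - 3 * Real.cos θ)⁻¹))
      volume 0 π :=
  (continuous_const.mul ((cont_ck _).mul cont_inv_denom)).intervalIntegrable 0 π

lemma int_single (a : ℝ) (k : ℕ) :
    ∫ θ in (0:ℝ)..π, a * (Real.cos ((k:ℝ) * θ) * (5 - 3 * Real.cos θ)⁻¹)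
      = a * (π / (4 * 3 ^ k)) := by
  rw [intervalIntegral.integral_const_mul, I_cos]

lemma int_comb (a1 a2 a3 a4 a5 a6 : ℝ) (k1 k2 k3 k4 k5 k6 : ℕ) :
    ∫ θ in (0:ℝ)..π,
      (a1 * (Real.cos ((k1:ℝ) * θ) * (5 - 3 * Real.cos θ)⁻¹)
      + a2 * (Real.cos ((k2:ℝ) * θ) * (5 - 3 * Real.cos θ)⁻¹)
      + a3 * (Real.cos ((k3:ℝ) * θ) * (5 - 3 * Real.cos θ)⁻¹)
      + a4 * (Real.cos ((k4:ℝ) * θ) * (5 - 3 * Real.cos θ)⁻¹)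
      + a5 * (Real.cos ((k5:ℝ) * θ) * (5 - 3 * Real.cos θ)⁻¹)
      + a6 * (Real.cos ((k6:ℝ) * θ) * (5 - 3 * Real.cos θ)⁻¹))
    = a1 * (π / (4 * 3 ^ k1)) + a2 * (π / (4 * 3 ^ k2)) + a3 * (π / (4 * 3 ^ k3))
      + a4 * (π / (4 * 3 ^ k4)) + a5 * (π / (4 * 3 ^ k5)) + a6 * (π / (4 * 3 ^ k6)) := by
  rw [intervalIntegral.integral_add (((((intble2 a1 k1).add (intble2 a2 k2)).add
        (intble2 a3 k3)).add (intble2 a4 k4)).add (intble2 a5 k5)) (intble2 a6 k6),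
      intervalIntegral.integral_add ((((intble2 a1 k1).add (intble2 a2 k2)).add
        (intble2 a3 k3)).add (intble2 a4 k4)) (intble2 a5 k5),
      intervalIntegral.integral_add (((intble2 a1 k1).add (intble2 a2 k2)).add
        (intble2 a3 k3)) (intble2 a4 k4),
      intervalIntegral.integral_add ((intble2 a1 k1).add (intble2 a2 k2)) (intble2 a3 k3),
      intervalIntegral.integral_add (intble2 a1 k1) (intble2 a2 k2),
      int_single, int_single, int_single, int_single, int_single, int_single]

lemma cont_body (m n : ℕ) :
    ContinuousOn (fun ξ : ℝ => (lalescuQ m).eval ξ * (lalescuQ n).eval ξ *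
      (9 / π * Real.sqrt (1 - ξ ^ 2) / (5 - 3 * ξ))) {x : ℝ | 5 - 3 * x ≠ 0} := by
  apply ContinuousOn.mul
  · exact ((lalescuQ m).continuous_aeval.mul (lalescuQ n).continuous_aeval).continuousOn
  · apply ContinuousOn.div
    · exact (continuous_const.mul (Real.continuous_sqrt.comp (by fun_prop))).continuousOn
    · fun_prop
    · exact fun x hx => hx

lemma subst_cos (m n : ℕ) :
    ∫ ξ in Set.Ioo (-1 : ℝ) 1,
        (lalescuQ m).eval ξ * (lalescuQ n).eval ξ *
          (9 / π * Real.sqrt (1 - ξ ^ 2) / (5 - 3 * ξ))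
      = ∫ θ in (0:ℝ)..π, Real.sin θ •
        ((lalescuQ m).eval (Real.cos θ) * (lalescuQ n).eval (Real.cos θ) *
          (9 / π * Real.sqrt (1 - Real.cos θ ^ 2) / (5 - 3 * Real.cos θ))) := by
  set g : ℝ → ℝ := fun ξ => (lalescuQ m).eval ξ * (lalescuQ n).eval ξ *
      (9 / π * Real.sqrt (1 - ξ ^ 2) / (5 - 3 * ξ)) with hg
  have hderiv : ∀ x ∈ Set.uIcc (0:ℝ) π, HasDerivAt Real.cos (-Real.sin x) x :=
    fun x _ => Real.hasDerivAt_cos x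
  have hcont : ContinuousOn (fun x : ℝ => -Real.sin x) (Set.uIcc 0 π) :=
    Real.continuous_sin.neg.continuousOn
  have himg : Real.cos '' Set.uIcc 0 π ⊆ {x : ℝ | 5 - 3 * x ≠ 0} := by
    rintro x ⟨θ, -, rfl⟩
    exact (denom_pos θ).ne'
  have hsub := intervalIntegral.integral_comp_smul_deriv' hderiv hcont
    ((cont_body m n).mono himg)
  rw [Real.cos_zero, Real.cos_pi] at hsub
  rw [← MeasureTheory.integral_Ioc_eq_integral_Ioo,
      ← intervalIntegral.integral_of_le (by norm_num : (-1:ℝ) ≤ 1)]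
  calc ∫ x in (-1:ℝ)..1, g x = -∫ x in (1:ℝ)..(-1), g x :=
        (intervalIntegral.integral_symm _ _)
    _ = -∫ x in (0:ℝ)..π, (-Real.sin x) • (g ∘ Real.cos) x := by rw [hsub]
    _ = ∫ θ in (0:ℝ)..π, Real.sin θ • g (Real.cos θ) := by
        rw [← intervalIntegral.integral_neg]
        congr 1
        funext x
        simp [Function.comp, smul_eq_mul]



lemma pointwise (m n : ℕ) (θ : ℝ) (hθ : θ ∈ Set.uIcc (0:ℝ) π) :
    Real.sin θ • ((lalescuQ m).eval (Real.cos θ) * (lalescuQ n).eval (Real.cos θ) *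
      (9 / π * Real.sqrt (1 - Real.cos θ ^ 2) / (5 - 3 * Real.cos θ)))
    = 9/π * ((Real.sin (((m:ℝ)+1)*θ) - 1/3 * Real.sin ((m:ℝ)*θ)) *
             (Real.sin (((n:ℝ)+1)*θ) - 1/3 * Real.sin ((n:ℝ)*θ))) * (5 - 3*Real.cos θ)⁻¹ := by
  rw [Set.uIcc_of_le Real.pi_nonneg] at hθ
  have hsin : 0 ≤ Real.sin θ := Real.sin_nonneg_of_nonneg_of_le_pi hθ.1 hθ.2
  have hsq : 1 - Real.cos θ ^ 2 = Real.sin θ ^ 2 := by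
    nlinarith [Real.sin_sq_add_cos_sq θ]
  rw [smul_eq_mul, hsq, Real.sqrt_sq hsin, ← eval_Q, ← eval_Q]
  have hD := (denom_pos θ).ne'
  field_simp

lemma expand_eq_lt (n e : ℕ) (θ : ℝ) :
    9/π * ((Real.sin (((↑(n+e+1):ℝ)+1)*θ) - 1/3 * Real.sin ((↑(n+e+1):ℝ)*θ)) *
       (Real.sin (((↑n:ℝ)+1)*θ) - 1/3 * Real.sin ((↑n:ℝ)*θ))) * (5 - 3*Real.cos θ)⁻¹
    = (9/π*(5/9)) * (Real.cos ((↑(e+1):ℝ)*θ) * (5 - 3*Real.cos θ)⁻¹)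
    + (9/π*(-1/2)) * (Real.cos ((↑(e+2*n+3):ℝ)*θ) * (5 - 3*Real.cos θ)⁻¹)
    + (9/π*(-1/6)) * (Real.cos ((↑(e+2):ℝ)*θ) * (5 - 3*Real.cos θ)⁻¹)
    + (9/π*(-1/6)) * (Real.cos ((↑e:ℝ)*θ) * (5 - 3*Real.cos θ)⁻¹)
    + (9/π*(1/3)) * (Real.cos ((↑(e+2*n+2):ℝ)*θ) * (5 - 3*Real.cos θ)⁻¹)
    + (9/π*(-1/18)) * (Real.cos ((↑(e+2*n+1):ℝ)*θ) * (5 - 3*Real.cos θ)⁻¹) := by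
  push_cast
  linear_combination (norm := ring_nf)
    (9/π) * (5 - 3*Real.cos θ)⁻¹ * key_trig (((n:ℝ)+e+1)*θ) ((n:ℝ)*θ) θ

lemma expand_eq_eq (n : ℕ) (θ : ℝ) :
    9/π * ((Real.sin (((↑n:ℝ)+1)*θ) - 1/3 * Real.sin ((↑n:ℝ)*θ)) *
       (Real.sin (((↑n:ℝ)+1)*θ) - 1/3 * Real.sin ((↑n:ℝ)*θ))) * (5 - 3*Real.cos θ)⁻¹
    = (9/π*(5/9)) * (Real.cos ((↑(0:ℕ):ℝ)*θ) * (5 - 3*Real.cos θ)⁻¹)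
    + (9/π*(-1/2)) * (Real.cos ((↑(2*n+2):ℝ)*θ) * (5 - 3*Real.cos θ)⁻¹)
    + (9/π*(-1/6)) * (Real.cos ((↑(1:ℕ):ℝ)*θ) * (5 - 3*Real.cos θ)⁻¹)
    + (9/π*(-1/6)) * (Real.cos ((↑(1:ℕ):ℝ)*θ) * (5 - 3*Real.cos θ)⁻¹)
    + (9/π*(1/3)) * (Real.cos ((↑(2*n+1):ℝ)*θ) * (5 - 3*Real.cos θ)⁻¹)
    + (9/π*(-1/18)) * (Real.cos ((↑(2*n):ℝ)*θ) * (5 - 3*Real.cos θ)⁻¹) := by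
  have key := key_trig ((n:ℝ)*θ) ((n:ℝ)*θ) θ
  rw [show ((n:ℝ)*θ - (n:ℝ)*θ - θ) = -θ by ring, Real.cos_neg] at key
  push_cast
  linear_combination (norm := ring_nf)
    (9/π) * (5 - 3*Real.cos θ)⁻¹ * key

/-- (Q_n) is orthonormal in L²(-1,1) with respect to the weight
ξ ↦ (9/π)·√(1-ξ²)/(5-3ξ). -/
theorem lalescuQ_orthonormal :
    ∀ m n : ℕ,
      ∫ ξ in Set.Ioo (-1 : ℝ) 1,
        (lalescuQ m).eval ξ * (lalescuQ n).eval ξ *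
          (9 / π * Real.sqrt (1 - ξ ^ 2) / (5 - 3 * ξ)) =
      if m = n then 1 else 0 := by
  have main : ∀ m n : ℕ, n ≤ m →
      (∫ ξ in Set.Ioo (-1 : ℝ) 1,
        (lalescuQ m).eval ξ * (lalescuQ n).eval ξ *
          (9 / π * Real.sqrt (1 - ξ ^ 2) / (5 - 3 * ξ)))
      = if m = n then 1 else 0 := by
    intro m n h
    rw [subst_cos m n, intervalIntegral.integral_congr (pointwise m n)]
    rcases eq_or_lt_of_le h with rfl | hlt
    · rw [if_pos rfl, intervalIntegral.integral_congr (fun θ _ => expand_eq_eq n θ), int_comb]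
      have h0 : (3:ℝ) ^ (2*n) ≠ 0 := by positivity
      have h1 : (3:ℝ) ^ (2*n+1) = 3 * 3^(2*n) := by rw [pow_succ]; ring
      have h2 : (3:ℝ) ^ (2*n+2) = 9 * 3^(2*n) := by rw [pow_add]; ring
      rw [h1, h2]
      field_simp
      ring
    · obtain ⟨e, rfl⟩ : ∃ e, m = n + e + 1 := ⟨m - n - 1, by omega⟩
      rw [if_neg (by omega),
        intervalIntegral.integral_congr (fun θ _ => expand_eq_lt n e θ), int_comb]
      have h0 : (3:ℝ) ^ e ≠ 0 := by positivity
      have h0' : (3:ℝ) ^ (2*n) ≠ 0 := by positivity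
      have e1 : (3:ℝ) ^ (e+1) = 3 * 3^e := by rw [pow_succ]; ring
      have e2 : (3:ℝ) ^ (e+2) = 9 * 3^e := by rw [pow_add]; ring
      have e3 : (3:ℝ) ^ (e+2*n+1) = 3 * (3^e * 3^(2*n)) := by rw [pow_add, pow_add]; ring
      have e4 : (3:ℝ) ^ (e+2*n+2) = 9 * (3^e * 3^(2*n)) := by
        rw [show e+2*n+2 = (e+2*n)+2 by ring, pow_add, pow_add]; ring
      have e5 : (3:ℝ) ^ (e+2*n+3) = 27 * (3^e * 3^(2*n)) := by
        rw [show e+2*n+3 = (e+2*n)+3 by ring, pow_add, pow_add]; ring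
      rw [e1, e2, e3, e4, e5]
      field_simp
      ring
  intro m n
  rcases le_total n m with h | h
  · exact main m n h
  · have hmain := main n m h
    rw [show (if m = n then (1:ℝ) else 0) = (if n = m then 1 else 0) by simp [eq_comm],
      ← hmain]
    apply MeasureTheory.integral_congr_ae
    filter_upwards with ξ
    ring
end
end
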